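/- arXiv:2507.19659 — 2 statements merged into one kernel-verified Lean document; each statement's English description precedes it below -/
import Mathlib

section
/- Bound on the intermediate-regime likelihood terms (Lemma 8): Let A be a finite alphabet with |A| = a ≥ 2, q = a−1, 0 < γmin ≤ γmax, λ ≥ max(γmax, γmin + γmax/q), and Q̃ a rate matrix on A^n whose off-diagonal entries vanish when d_H(u,v) > 1, lie in [γmin, γmax] when d_H(u,v) = 1, and whose rows sum to zero; set R̃ = I + Q̃/(nqλ). Fix t > 0, define δ★(t) := min( t·q·γmin/(2t(γmax+q)+4), q/(q + e·γ★) ) with γ★ = γmax/γmin, and let x, y ∈ A^n with r := d_H(x,y) < ⌊n·δ★(t)⌋/2. Then for any integer p(n) ≥ ⌊nλtq/2⌋ + 1 and any T ≥ t, e^{−Tnqλ} · Σ_{m=⌊nλtq/2⌋+1}^{p(n)} (nTqλ)^m/m! · (R̃^m)_{x,y} ≤ exp(−t·n·q·λ·(1 − e^{−γmin/8})) + p(n)² · exp(−n·δ★(t)/2 + 1). Moreover, if t < t₀ := min(1/(γmax+q), q/(q + e·γ★)), then δ★(t) ≥ t·min(q·γmin/6, 1). -/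
open Finset
namespace IRB



lemma pow_entry_nonneg {ι : Type*} [Fintype ι] [DecidableEq ι]
    (P : Matrix ι ι ℝ) (h : ∀ u v, 0 ≤ P u v) (m : ℕ) :
    ∀ u v, 0 ≤ (P ^ m) u v := by
  induction m with
  | zero =>
      intro u v
      rw [pow_zero]
      rw [Matrix.one_apply]
      split <;> norm_num
  | succ k ih =>
      intro u v
      rw [pow_succ, Matrix.mul_apply]
      exact Finset.sum_nonneg fun w _ => mul_nonneg (ih u w) (h w v)

lemma pow_rowsum {ι : Type*} [Fintype ι] [DecidableEq ι]
    (P : Matrix ι ι ℝ) (h : ∀ u, ∑ v, P u v = 1) (m : ℕ) :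
    ∀ u, ∑ v, (P ^ m) u v = 1 := by
  induction m with
  | zero =>
      intro u
      simp [Matrix.one_apply]
  | succ k ih =>
      intro u
      rw [pow_succ]
      simp only [Matrix.mul_apply]
      rw [Finset.sum_comm]
      simp_rw [← Finset.mul_sum, h, mul_one]
      exact ih u

lemma last_exit {ι : Type*} [Fintype ι] [DecidableEq ι]
    (K L : Matrix ι ι ℝ) (m : ℕ) :
    (K + L) ^ m = K ^ m + ∑ j ∈ Finset.range m, (K + L) ^ j * L * K ^ (m - 1 - j) := by
  induction m with
  | zero => simp
  | succ k ih =>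
      rw [pow_succ', ih, mul_add, Finset.mul_sum]
      have h1 : (K + L) * K ^ k = K ^ (k+1) + (K + L) ^ 0 * L * K ^ (k - 0) := by
        rw [add_mul, pow_zero, one_mul, pow_succ']
        simp
      rw [h1]
      have h2 : ∀ j ∈ Finset.range k,
          (K + L) * ((K + L) ^ j * L * K ^ (k - 1 - j))
            = (K + L) ^ (j + 1) * L * K ^ (k + 1 - 1 - (j + 1)) := by
        intro j hj
        rw [Finset.mem_range] at hj
        have : k + 1 - 1 - (j + 1) = k - 1 - j := by omega
        rw [this, ← mul_assoc, ← mul_assoc, ← pow_succ']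
      rw [Finset.sum_congr rfl h2]
      rw [Finset.sum_range_succ' (fun j => (K + L) ^ j * L * K ^ (k + 1 - 1 - j)) k]
      simp only [Nat.sub_zero, Nat.add_sub_cancel]
      abel



lemma kill_bound {ι : Type*} [Fintype ι] [DecidableEq ι]
    (P : Matrix ι ι ℝ) (hnn : ∀ u v, 0 ≤ P u v) (hrs : ∀ u, ∑ v, P u v = 1)
    (Bs : Finset ι) (h : ι → ℝ) (hh : ∀ v, 0 ≤ h v) (y : ι) (hy : y ∈ Bs) (hhy : h y = 1)
    (κ H : ℝ) (hκ0 : 0 ≤ κ) (hκ1 : κ ≤ 1) (hH : 0 ≤ H)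
    (hA : ∀ u ∈ Bs, ∑ v ∈ Bs, P u v * h v ≤ κ * h u)
    (hB : ∀ u, u ∉ Bs → ∑ v ∈ Bs, P u v * h v ≤ H)
    (x : ι) (hx : x ∈ Bs) (m : ℕ) :
    (P ^ m) x y ≤ κ ^ m * h x + m * H := by
  classical
  set K : Matrix ι ι ℝ := Matrix.of (fun u v => if v ∈ Bs then P u v else 0) with hK
  set L : Matrix ι ι ℝ := Matrix.of (fun u v => if v ∈ Bs then 0 else P u v) with hL
  have hKapp : ∀ u v, K u v = if v ∈ Bs then P u v else 0 := fun u v => rfl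
  have hLapp : ∀ u v, L u v = if v ∈ Bs then 0 else P u v := fun u v => rfl
  have hKL : K + L = P := by
    ext u v
    rw [Matrix.add_apply, hKapp, hLapp]
    by_cases hv : v ∈ Bs <;> simp [hv]
  have hKnn : ∀ u v, 0 ≤ K u v := by
    intro u v; rw [hKapp]; by_cases hv : v ∈ Bs <;> simp [hv, hnn u v]
  have hKpow_nn : ∀ i u v, 0 ≤ (K ^ i) u v := fun i => IRB.pow_entry_nonneg K hKnn i
  have hWnn : ∀ i u, 0 ≤ ∑ v, (K ^ i) u v * h v := fun i u =>
    Finset.sum_nonneg fun v _ => mul_nonneg (hKpow_nn i u v) (hh v)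
  -- one-step expansion
  have hexp : ∀ i u, ∑ v, (K ^ (i+1)) u v * h v
      = ∑ w, K u w * (∑ v, (K ^ i) w v * h v) := by
    intro i u
    simp only [pow_succ', Matrix.mul_apply, Finset.sum_mul]
    rw [Finset.sum_comm]
    refine Finset.sum_congr rfl fun w _ => ?_
    rw [Finset.mul_sum]
    refine Finset.sum_congr rfl fun v _ => ?_
    ring
  have hstep : ∀ i u, (∀ w ∈ Bs, ∑ v, (K ^ i) w v * h v ≤ κ ^ i * h w) →
      ∑ v, (K ^ (i+1)) u v * h v ≤ κ ^ i * ∑ w ∈ Bs, P u w * h w := by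
    intro i u hind
    rw [hexp i u]
    have step1 : ∑ w, K u w * (∑ v, (K ^ i) w v * h v)
        ≤ ∑ w, (if w ∈ Bs then P u w * (κ ^ i * h w) else 0) := by
      refine Finset.sum_le_sum fun w _ => ?_
      rw [hKapp]
      by_cases hw : w ∈ Bs
      · simp only [hw, if_true]
        exact mul_le_mul_of_nonneg_left (hind w hw) (hnn u w)
      · simp [hw]
    refine step1.trans ?_
    rw [Finset.sum_ite_mem, Finset.univ_inter, Finset.mul_sum]
    refine le_of_eq (Finset.sum_congr rfl fun w _ => by ring)
  -- S1
  have S1 : ∀ i, ∀ w ∈ Bs, ∑ v, (K ^ i) w v * h v ≤ κ ^ i * h w := by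
    intro i
    induction i with
    | zero =>
        intro w _
        simp only [pow_zero, Matrix.one_apply, one_mul]
        have : ∑ v, (if w = v then (1:ℝ) else 0) * h v = h w := by
          rw [Finset.sum_congr rfl (fun v _ => by rw [ite_mul, one_mul, zero_mul])]
          rw [Finset.sum_ite_eq Finset.univ w h]
          simp
        rw [this]
    | succ i ih =>
        intro w hw
        refine (hstep i w ih).trans ?_
        have := hA w hw
        calc κ ^ i * ∑ v ∈ Bs, P w v * h v ≤ κ ^ i * (κ * h w) :=
              mul_le_mul_of_nonneg_left (hA w hw) (pow_nonneg hκ0 i)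
          _ = κ ^ (i+1) * h w := by ring
  -- T2 entry bounds
  have eT1 : ∀ i u, (K ^ i) u y ≤ ∑ v, (K ^ i) u v * h v := by
    intro i u
    have : (K ^ i) u y = (K ^ i) u y * h y := by rw [hhy, mul_one]
    rw [this]
    exact Finset.single_le_sum (fun v _ => mul_nonneg (hKpow_nn i u v) (hh v)) (Finset.mem_univ y)
  have eK : ∀ i u, u ∉ Bs → (K ^ i) u y ≤ H := by
    intro i u hu
    cases i with
    | zero =>
        have huy : u ≠ y := fun he => hu (by rw [he]; exact hy)
        rw [pow_zero, Matrix.one_apply_ne huy]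
        exact hH
    | succ i =>
        refine (eT1 (i+1) u).trans ?_
        refine (hstep i u (S1 i)).trans ?_
        calc κ ^ i * ∑ w ∈ Bs, P u w * h w ≤ κ ^ i * H :=
              mul_le_mul_of_nonneg_left (hB u hu) (pow_nonneg hκ0 i)
          _ ≤ 1 * H := mul_le_mul_of_nonneg_right (pow_le_one₀ hκ0 hκ1) hH
          _ = H := one_mul H
  have eB : (K ^ m) x y ≤ κ ^ m * h x := (eT1 m x).trans (S1 m x hx)
  -- decomposition
  have hdecomp : P ^ m = K ^ m + ∑ j ∈ Finset.range m, P ^ j * L * K ^ (m - 1 - j) := by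
    conv_lhs => rw [← hKL]
    rw [IRB.last_exit K L m, hKL]
  have hPpow_nn : ∀ i u v, 0 ≤ (P ^ i) u v := fun i => IRB.pow_entry_nonneg P hnn i
  have hPpow_rs : ∀ i u, ∑ v, (P ^ i) u v = 1 := fun i => IRB.pow_rowsum P hrs i
  have hterm : ∀ j, (P ^ j * L * K ^ (m - 1 - j)) x y ≤ H := by
    intro j
    have hPL : ∀ u, (P ^ j * L) x u = if u ∈ Bs then 0 else (P ^ (j+1)) x u := by
      intro u
      rw [Matrix.mul_apply]
      by_cases hu : u ∈ Bs
      · simp only [hu, if_true]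
        refine Finset.sum_eq_zero fun w _ => ?_
        rw [hLapp]; simp [hu]
      · simp only [hu, if_false, pow_succ, Matrix.mul_apply]
        refine Finset.sum_congr rfl fun w _ => ?_
        rw [hLapp]; simp [hu]
    rw [Matrix.mul_apply]
    have hb1 : ∀ u, (P ^ j * L) x u * (K ^ (m - 1 - j)) u y
        ≤ (if u ∈ Bs then 0 else (P ^ (j+1)) x u) * H := by
      intro u
      rw [hPL u]
      by_cases hu : u ∈ Bs
      · simp [hu]
      · simp only [hu, if_false]
        exact mul_le_mul_of_nonneg_left (eK _ u hu) (hPpow_nn (j+1) x u)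
    refine (Finset.sum_le_sum fun u _ => hb1 u).trans ?_
    have : ∑ u, (if u ∈ Bs then 0 else (P ^ (j+1)) x u) * H
        ≤ ∑ u, (P ^ (j+1)) x u * H := by
      refine Finset.sum_le_sum fun u _ => ?_
      by_cases hu : u ∈ Bs
      · simp only [hu, if_true, zero_mul]
        exact mul_nonneg (hPpow_nn (j+1) x u) hH
      · simp [hu]
    refine this.trans ?_
    rw [← Finset.sum_mul, hPpow_rs (j+1) x, one_mul]
  -- assemble
  have := congrFun (congrFun hdecomp x) y
  have hentry : (P ^ m) x y = (K ^ m) x y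
      + ∑ j ∈ Finset.range m, (P ^ j * L * K ^ (m - 1 - j)) x y := by
    rw [hdecomp]
    rw [Matrix.add_apply, Matrix.sum_apply]
  rw [hentry]
  have hsum : ∑ j ∈ Finset.range m, (P ^ j * L * K ^ (m - 1 - j)) x y ≤ m * H := by
    refine (Finset.sum_le_sum fun j _ => hterm j).trans ?_
    rw [Finset.sum_const, Finset.card_range, nsmul_eq_mul]
  exact add_le_add eB hsum



variable {n a : ℕ}

lemma upd_dist_one (u : Fin n → Fin a) (c : Fin n) (b : Fin a) (hb : b ≠ u c) :
    hammingDist u (Function.update u c b) = 1 := by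
  have : (Finset.univ.filter fun i => u i ≠ Function.update u c b i) = {c} := by
    ext i
    simp only [Finset.mem_filter, Finset.mem_univ, true_and, Finset.mem_singleton]
    by_cases hi : i = c
    · subst hi
      simp only [Function.update_self, iff_true]
      exact fun h => hb h.symm
    · simp [Function.update_of_ne hi, hi]
  show (Finset.univ.filter fun i => u i ≠ Function.update u c b i).card = 1
  rw [this, Finset.card_singleton]

lemma filter_upd_ne (u y : Fin n → Fin a) (c : Fin n) (b : Fin a) (hb : b ≠ y c) :
    (Finset.univ.filter fun i => Function.update u c b i ≠ y i)
      = insert c (Finset.univ.filter fun i => u i ≠ y i) := by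
  ext i
  simp only [Finset.mem_filter, Finset.mem_univ, true_and, Finset.mem_insert]
  by_cases hi : i = c
  · subst hi
    simp [Function.update_self, hb]
  · simp [Function.update_of_ne hi, hi]

lemma dy_upd_far (u y : Fin n → Fin a) (c : Fin n) (b : Fin a)
    (hc : u c = y c) (hb : b ≠ u c) :
    hammingDist (Function.update u c b) y = hammingDist u y + 1 := by
  have hb' : b ≠ y c := fun h => hb (h.trans hc.symm)
  show (Finset.univ.filter fun i => Function.update u c b i ≠ y i).card = _
  rw [filter_upd_ne u y c b hb']
  rw [Finset.card_insert_of_notMem (by simp [hc])]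
  rfl

lemma dy_upd_ge (u y : Fin n → Fin a) (c : Fin n) (b : Fin a) (hb : b ≠ y c) :
    hammingDist u y ≤ hammingDist (Function.update u c b) y := by
  show _ ≤ (Finset.univ.filter fun i => Function.update u c b i ≠ y i).card
  rw [filter_upd_ne u y c b hb]
  exact Finset.card_le_card (Finset.subset_insert c _)

lemma upd_inj (u : Fin n → Fin a) (c c' : Fin n) (b b' : Fin a)
    (hb : b ≠ u c) (hb' : b' ≠ u c')
    (h : Function.update u c b = Function.update u c' b') : c = c' ∧ b = b' := by
  have hcc : c = c' := by
    by_contra hne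
    have h1 := congrFun h c
    rw [Function.update_self, Function.update_of_ne hne] at h1
    exact hb h1
  subst hcc
  refine ⟨rfl, ?_⟩
  have h1 := congrFun h c
  rwa [Function.update_self, Function.update_self] at h1

lemma exists_upd (u v : Fin n → Fin a) (h : hammingDist u v = 1) :
    ∃ c, u c ≠ v c ∧ v = Function.update u c (v c) := by
  have hcard : (Finset.univ.filter fun i => u i ≠ v i).card = 1 := h
  obtain ⟨c, hc⟩ := Finset.card_eq_one.mp hcard
  have hcmem : c ∈ Finset.univ.filter fun i => u i ≠ v i := by rw [hc]; exact Finset.mem_singleton_self c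
  have hcne : u c ≠ v c := (Finset.mem_filter.mp hcmem).2
  refine ⟨c, hcne, ?_⟩
  funext i
  by_cases hi : i = c
  · subst hi; rw [Function.update_self]
  · rw [Function.update_of_ne hi]
    by_contra hne
    have : i ∈ Finset.univ.filter fun j => u j ≠ v j := by
      simp only [Finset.mem_filter, Finset.mem_univ, true_and]
      exact fun h => hne h.symm
    rw [hc, Finset.mem_singleton] at this
    exact hi this


end IRB
set_option maxHeartbeats 1000000 in
/-- **Bound on the intermediate-regime likelihood terms (Lemma 8).**
With `R̃ = I + Q̃/(nqλ)`, `δ★(t) = min(tqγmin/(2t(γmax+q)+4), q/(q+eγ★))` and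
`r = d_H(x,y) < ⌊nδ★(t)⌋/2`, for any integer `p ≥ ⌊nλtq/2⌋+1` and any `T ≥ t`,
`e^{−Tnqλ} Σ_{m=⌊nλtq/2⌋+1}^{p} (nTqλ)^m/m! (R̃^m)_{x,y}
  ≤ exp(−tnqλ(1−e^{−γmin/8})) + p² exp(−nδ★(t)/2 + 1)`.
Moreover, if `t < t₀ = min(1/(γmax+q), q/(q+eγ★))` then `δ★(t) ≥ t·min(qγmin/6, 1)`. -/
theorem intermediate_regime_bound
    (a n : ℕ) (ha : 2 ≤ a) (hn : 1 ≤ n)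
    (γmin γmax lam t : ℝ)
    (hγmin : 0 < γmin) (hγ : γmin ≤ γmax)
    (hlam : max γmax (γmin + γmax / ((a : ℝ) - 1)) ≤ lam)
    (ht : 0 < t)
    (Q : Matrix (Fin n → Fin a) (Fin n → Fin a) ℝ)
    (hQ1 : ∀ u v : Fin n → Fin a, hammingDist u v = 1 → Q u v ∈ Set.Icc γmin γmax)
    (hQ2 : ∀ u v : Fin n → Fin a, u ≠ v → hammingDist u v ≠ 1 → Q u v = 0)
    (hQ3 : ∀ u : Fin n → Fin a, ∑ v, Q u v = 0)
    (R : Matrix (Fin n → Fin a) (Fin n → Fin a) ℝ)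
    (hR : R = 1 + (((n : ℝ) * ((a : ℝ) - 1) * lam))⁻¹ • Q)
    (γstar δstar : ℝ) (hγstar : γstar = γmax / γmin)
    (hδstar : δstar = min (t * ((a : ℝ) - 1) * γmin / (2 * t * (γmax + ((a : ℝ) - 1)) + 4))
      (((a : ℝ) - 1) / (((a : ℝ) - 1) + Real.exp 1 * γstar)))
    (x y : Fin n → Fin a)
    (hr : (hammingDist x y : ℝ) < (⌊(n : ℝ) * δstar⌋₊ : ℝ) / 2)
    (p : ℕ) (hp : ⌊(n : ℝ) * lam * t * ((a : ℝ) - 1) / 2⌋₊ + 1 ≤ p)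
    (T : ℝ) (hT : t ≤ T) :
    (Real.exp (-(T * n * ((a : ℝ) - 1) * lam)) *
        ∑ m ∈ Finset.Icc (⌊(n : ℝ) * lam * t * ((a : ℝ) - 1) / 2⌋₊ + 1) p,
          ((n : ℝ) * T * ((a : ℝ) - 1) * lam) ^ m / (Nat.factorial m) * (R ^ m) x y
      ≤ Real.exp (-(t * n * ((a : ℝ) - 1) * lam * (1 - Real.exp (-(γmin / 8)))))
        + (p : ℝ) ^ 2 * Real.exp (-((n : ℝ) * δstar / 2) + 1))
    ∧ (t < min (1 / (γmax + ((a : ℝ) - 1)))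
          (((a : ℝ) - 1) / (((a : ℝ) - 1) + Real.exp 1 * γstar)) →
        t * min (((a : ℝ) - 1) * γmin / 6) 1 ≤ δstar) := by
  classical
  have ha2 : (2:ℝ) ≤ (a:ℝ) := by exact_mod_cast ha
  have hq1 : (1:ℝ) ≤ (a:ℝ) - 1 := by linarith
  have hq0 : (0:ℝ) < (a:ℝ) - 1 := by linarith
  have hγmax : 0 < γmax := lt_of_lt_of_le hγmin hγ
  have hlam1 : γmax ≤ lam := le_trans (le_max_left _ _) hlam
  have hlam0 : 0 < lam := lt_of_lt_of_le hγmax hlam1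
  have hγminlam : γmin ≤ lam := le_trans hγ hlam1
  have hn1 : (1:ℝ) ≤ (n:ℝ) := by exact_mod_cast hn
  have hn0 : (0:ℝ) < (n:ℝ) := lt_of_lt_of_le one_pos hn1
  have hγstar0 : 0 < γstar := by rw [hγstar]; positivity
  have hE2 : (2:ℝ) < Real.exp 1 := lt_trans (by norm_num) Real.exp_one_gt_d9
  have hE0 : (0:ℝ) < Real.exp 1 := by linarith
  constructor
  · -- part 1
    -- ===================== PART 1 =====================
    set qR : ℝ := (a:ℝ) - 1 with hqdef
    clear_value qR
    set cc : ℝ := (n:ℝ) * qR * lam with hcdef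
    clear_value cc
    have hc0 : (0:ℝ) < cc := by rw [hcdef]; exact mul_pos (mul_pos hn0 hq0) hlam0
    have hgq : (0:ℝ) < γmax + qR := by linarith
    have htq : (0:ℝ) < 2 * t * (γmax + qR) + 4 := by
      have := mul_pos (mul_pos two_pos ht) hgq
      linarith
    have hEγ : (0:ℝ) < Real.exp 1 * γstar := mul_pos hE0 hγstar0
    have hqEγ : (0:ℝ) < qR + Real.exp 1 * γstar := by linarith
    have hδpos : 0 < δstar := by
      rw [hδstar]
      apply lt_min
      · exact div_pos (mul_pos (mul_pos ht hq0) hγmin) htq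
      · exact div_pos hq0 hqEγ
    set D : ℝ := (n:ℝ) * δstar with hDdef
    clear_value D
    have hD0 : (0:ℝ) < D := by rw [hDdef]; exact mul_pos hn0 hδpos
    have hD1 : (1:ℝ) ≤ D := by
      have h0 : (0:ℝ) ≤ (hammingDist x y : ℝ) := Nat.cast_nonneg _
      have h1 : (0:ℝ) < (⌊D⌋₊ : ℝ) := by
        have := lt_of_le_of_lt h0 hr; linarith
      have h2 : 0 < ⌊D⌋₊ := by exact_mod_cast h1
      exact Nat.floor_pos.mp h2
    have hδ2 : δstar * (qR + Real.exp 1 * γstar) ≤ qR := by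
      have h2 : δstar ≤ qR / (qR + Real.exp 1 * γstar) := by rw [hδstar]; exact min_le_right _ _
      have hden : (0:ℝ) < qR + Real.exp 1 * γstar := hqEγ
      calc δstar * (qR + Real.exp 1 * γstar)
          ≤ (qR / (qR + Real.exp 1 * γstar)) * (qR + Real.exp 1 * γstar) :=
            mul_le_mul_of_nonneg_right h2 hden.le
        _ = qR := div_mul_cancel₀ _ hden.ne'
    have hgg : γstar * γmin = γmax := by rw [hγstar]; field_simp
    have hmargin : D * (qR * γmin + Real.exp 1 * γmax) ≤ (n:ℝ) * qR * γmin := by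
      have h3 := mul_le_mul_of_nonneg_left hδ2
        (mul_nonneg hn0.le hγmin.le : (0:ℝ) ≤ (n:ℝ) * γmin)
      calc D * (qR * γmin + Real.exp 1 * γmax)
          = (n:ℝ) * γmin * (δstar * (qR + Real.exp 1 * γstar)) := by rw [hDdef, ← hgg]; ring
        _ ≤ (n:ℝ) * γmin * qR := h3
        _ = (n:ℝ) * qR * γmin := by ring
    have hD4 : 4 * D ≤ t * (n:ℝ) * qR * γmin := by
      have h1 : δstar ≤ t * qR * γmin / (2 * t * (γmax + qR) + 4) := by
        rw [hδstar]; exact min_le_left _ _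
      have hden : (0:ℝ) < 2 * t * (γmax + qR) + 4 := htq
      have h2 : δstar * (2 * t * (γmax + qR) + 4) ≤ t * qR * γmin := by
        calc δstar * (2 * t * (γmax + qR) + 4)
            ≤ (t * qR * γmin / (2 * t * (γmax + qR) + 4)) * (2 * t * (γmax + qR) + 4) :=
              mul_le_mul_of_nonneg_right h1 hden.le
          _ = t * qR * γmin := div_mul_cancel₀ _ hden.ne'
      have h3 := mul_le_mul_of_nonneg_left h2 hn0.le
      have h6 : (n:ℝ) * (δstar * (2 * t * (γmax + qR) + 4))
          = D * (2 * t * (γmax + qR)) + 4 * D := by rw [hDdef]; ring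
      have h7 : (0:ℝ) ≤ D * (2 * t * (γmax + qR)) := by
        apply mul_nonneg hD0.le
        have := mul_pos (mul_pos two_pos ht) hgq
        linarith
      have h8 : (n:ℝ) * (t * qR * γmin) = t * (n:ℝ) * qR * γmin := by ring
      linarith
    -- ------- R entry facts -------
    have hRapp : ∀ u v, R u v = (if u = v then (1:ℝ) else 0) + cc⁻¹ * Q u v := by
      intro u v
      rw [hR, Matrix.add_apply, Matrix.smul_apply, Matrix.one_apply, smul_eq_mul]
    have hRzero : ∀ u v, u ≠ v → hammingDist u v ≠ 1 → R u v = 0 := by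
      intro u v h1 h2
      rw [hRapp, if_neg h1, hQ2 u v h1 h2, mul_zero, add_zero]
    have hdist_ne : ∀ u v : Fin n → Fin a, hammingDist u v = 1 → u ≠ v := by
      intro u v h he
      rw [he, hammingDist_self] at h
      exact one_ne_zero h.symm
    have hcinv0 : (0:ℝ) < cc⁻¹ := inv_pos.mpr hc0
    have hRone_lb : ∀ u v, hammingDist u v = 1 → cc⁻¹ * γmin ≤ R u v := by
      intro u v h
      have h1 := (hQ1 u v h).1
      rw [hRapp, if_neg (hdist_ne u v h)]
      have h2 : cc⁻¹ * γmin ≤ cc⁻¹ * Q u v := mul_le_mul_of_nonneg_left h1 hcinv0.le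
      linarith
    have hRone_ub : ∀ u v, hammingDist u v = 1 → R u v ≤ cc⁻¹ * γmax := by
      intro u v h
      have h1 := (hQ1 u v h).2
      rw [hRapp, if_neg (hdist_ne u v h)]
      have h2 : cc⁻¹ * Q u v ≤ cc⁻¹ * γmax := mul_le_mul_of_nonneg_left h1 hcinv0.le
      linarith
    -- ------- cardinality of 1-neighborhoods -------
    have hcard1 : ∀ u : Fin n → Fin a,
        ((Finset.univ.filter fun v => hammingDist u v = 1).card : ℝ) ≤ (n:ℝ) * qR := by
      intro u
      have hsub : (Finset.univ.filter fun v => hammingDist u v = 1)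
          ⊆ (Finset.univ.sigma (fun i : Fin n => Finset.univ.erase (u i))).image
              (fun cb : (_ : Fin n) × Fin a => Function.update u cb.1 cb.2) := by
        intro v hv
        rw [Finset.mem_filter] at hv
        obtain ⟨i, hne, hveq⟩ := IRB.exists_upd u v hv.2
        refine Finset.mem_image.mpr ⟨⟨i, v i⟩, ?_, hveq.symm⟩
        rw [Finset.mem_sigma]
        exact ⟨Finset.mem_univ _, Finset.mem_erase.mpr ⟨Ne.symm hne, Finset.mem_univ _⟩⟩
      have h1 := (Finset.card_le_card hsub).trans Finset.card_image_le
      have h2 : (Finset.univ.sigma (fun i : Fin n => Finset.univ.erase (u i))).card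
          = n * (a - 1) := by
        rw [Finset.card_sigma]
        have he : ∀ i : Fin n, (Finset.univ.erase (u i)).card = a - 1 := by
          intro i
          rw [Finset.card_erase_of_mem (Finset.mem_univ _), Finset.card_univ, Fintype.card_fin]
        rw [Finset.sum_congr rfl (fun i _ => he i), Finset.sum_const, Finset.card_univ,
          Fintype.card_fin, smul_eq_mul]
      rw [h2] at h1
      have h3 : ((n * (a-1) : ℕ) : ℝ) = (n:ℝ) * qR := by
        push_cast [Nat.cast_sub (le_trans one_le_two ha)]
        rw [hqdef]
      calc ((Finset.univ.filter fun v => hammingDist u v = 1).card : ℝ)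
          ≤ ((n * (a-1) : ℕ) : ℝ) := by exact_mod_cast h1
        _ = (n:ℝ) * qR := h3
    -- ------- diagonal nonnegativity, row sums -------
    have hSdiag : ∀ u, ∑ v ∈ Finset.univ.erase u, Q u v ≤ cc := by
      intro u
      have hsplit := Finset.sum_filter_add_sum_filter_not (Finset.univ.erase u)
        (fun v => hammingDist u v = 1) (fun v => Q u v)
      have hz : ∑ v ∈ (Finset.univ.erase u).filter (fun v => ¬ hammingDist u v = 1), Q u v = 0 := by
        refine Finset.sum_eq_zero fun v hv => ?_
        rw [Finset.mem_filter, Finset.mem_erase] at hv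
        exact hQ2 u v (Ne.symm hv.1.1) hv.2
      have hsub2 : (Finset.univ.erase u).filter (fun v => hammingDist u v = 1)
          ⊆ Finset.univ.filter (fun v => hammingDist u v = 1) := by
        intro v hv
        rw [Finset.mem_filter] at hv ⊢
        exact ⟨Finset.mem_univ _, hv.2⟩
      have hb1 : ∑ v ∈ (Finset.univ.erase u).filter (fun v => hammingDist u v = 1), Q u v
          ≤ ∑ v ∈ Finset.univ.filter (fun v => hammingDist u v = 1), Q u v := by
        refine Finset.sum_le_sum_of_subset_of_nonneg hsub2 fun v hv _ => ?_
        rw [Finset.mem_filter] at hv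
        exact le_trans hγmin.le (hQ1 u v hv.2).1
      have hb2 : ∑ v ∈ Finset.univ.filter (fun v => hammingDist u v = 1), Q u v
          ≤ ((Finset.univ.filter fun v => hammingDist u v = 1).card : ℝ) * γmax := by
        have := Finset.sum_le_card_nsmul (Finset.univ.filter fun v => hammingDist u v = 1)
          (fun v => Q u v) γmax (fun v hv => (hQ1 u v (Finset.mem_filter.mp hv).2).2)
        rwa [nsmul_eq_mul] at this
      have hb3 : ((Finset.univ.filter fun v => hammingDist u v = 1).card : ℝ) * γmax
          ≤ (n:ℝ) * qR * γmax := mul_le_mul_of_nonneg_right (hcard1 u) hγmax.le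
      have hb4 : (n:ℝ) * qR * γmax ≤ cc := by
        rw [hcdef]
        have := mul_le_mul_of_nonneg_left hlam1 (mul_nonneg hn0.le hq0.le : (0:ℝ) ≤ (n:ℝ) * qR)
        calc (n:ℝ) * qR * γmax = (n:ℝ) * qR * γmax := rfl
          _ ≤ (n:ℝ) * qR * lam := this
      linarith
    have hRdiag_nn : ∀ u, 0 ≤ R u u := by
      intro u
      rw [hRapp, if_pos rfl]
      have hQd : Q u u = - ∑ v ∈ Finset.univ.erase u, Q u v := by
        have h0 := hQ3 u
        rw [← Finset.add_sum_erase _ _ (Finset.mem_univ u)] at h0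
        linarith
      rw [hQd]
      have h1 := hSdiag u
      have h2 : cc⁻¹ * ∑ v ∈ Finset.univ.erase u, Q u v ≤ cc⁻¹ * cc :=
        mul_le_mul_of_nonneg_left h1 hcinv0.le
      rw [inv_mul_cancel₀ hc0.ne'] at h2
      have h3 : cc⁻¹ * -(∑ v ∈ Finset.univ.erase u, Q u v)
          = -(cc⁻¹ * ∑ v ∈ Finset.univ.erase u, Q u v) := by ring
      rw [h3]
      linarith
    have hRnn : ∀ u v, 0 ≤ R u v := by
      intro u v
      by_cases he : u = v
      · subst he; exact hRdiag_nn u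
      · by_cases h1 : hammingDist u v = 1
        · exact le_trans (mul_nonneg hcinv0.le hγmin.le) (hRone_lb u v h1)
        · rw [hRzero u v he h1]
    have hRrow : ∀ u, ∑ v, R u v = 1 := by
      intro u
      rw [Finset.sum_congr rfl (fun v _ => hRapp u v), Finset.sum_add_distrib,
        ← Finset.mul_sum, hQ3, mul_zero, add_zero, Finset.sum_ite_eq]
      simp
    -- ------- close/far mass bounds -------
    have hclose : ∀ u, ∑ v ∈ Finset.univ.filter (fun v => hammingDist v y < hammingDist u y), R u v
        ≤ (hammingDist u y : ℝ) * (cc⁻¹ * γmax) := by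
      intro u
      have hkey : ∀ v ∈ Finset.univ.filter (fun v => hammingDist v y < hammingDist u y),
          R u v ≠ 0 → v ∈ (Finset.univ.filter (fun i : Fin n => u i ≠ y i)).image
            (fun i => Function.update u i (y i)) := by
        intro v hv hR0
        rw [Finset.mem_filter] at hv
        have hvu : v ≠ u := by
          intro h; rw [h] at hv; exact lt_irrefl _ hv.2
        have hdist : hammingDist u v = 1 := by
          by_contra hne
          exact hR0 (hRzero u v (Ne.symm hvu) hne)
        obtain ⟨i, hne, hveq⟩ := IRB.exists_upd u v hdist
        by_cases hvy : v i = y i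
        · by_cases huy : u i = y i
          · exact absurd (huy.trans hvy.symm) hne
          · refine Finset.mem_image.mpr ⟨i, Finset.mem_filter.mpr ⟨Finset.mem_univ _, huy⟩, ?_⟩
            rw [← hvy]; exact hveq.symm
        · exfalso
          have hge := IRB.dy_upd_ge u y i (v i) hvy
          rw [← hveq] at hge
          exact absurd hv.2 (not_lt.mpr hge)
      have h1 : ∑ v ∈ Finset.univ.filter (fun v => hammingDist v y < hammingDist u y), R u v
          = ∑ v ∈ (Finset.univ.filter (fun v => hammingDist v y < hammingDist u y)).filter
              (fun v => R u v ≠ 0), R u v := (Finset.sum_filter_ne_zero _).symm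
      rw [h1]
      have h2 : (Finset.univ.filter (fun v => hammingDist v y < hammingDist u y)).filter
          (fun v => R u v ≠ 0) ⊆ (Finset.univ.filter (fun i : Fin n => u i ≠ y i)).image
            (fun i => Function.update u i (y i)) := by
        intro v hv
        rw [Finset.mem_filter] at hv
        exact hkey v hv.1 hv.2
      have h3 := Finset.sum_le_sum_of_subset_of_nonneg h2 (fun v _ _ => hRnn u v)
      refine h3.trans ?_
      have h4 : ∑ v ∈ (Finset.univ.filter (fun i : Fin n => u i ≠ y i)).image
            (fun i => Function.update u i (y i)), R u v
          = ∑ i ∈ Finset.univ.filter (fun i : Fin n => u i ≠ y i),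
              R u (Function.update u i (y i)) := by
        refine Finset.sum_image ?_
        intro i hi j hj hij
        have hbi : y i ≠ u i := Ne.symm (Finset.mem_filter.mp hi).2
        have hbj : y j ≠ u j := Ne.symm (Finset.mem_filter.mp hj).2
        exact (IRB.upd_inj u i j (y i) (y j) hbi hbj hij).1
      rw [h4]
      have h5 : ∀ i ∈ Finset.univ.filter (fun i : Fin n => u i ≠ y i),
          R u (Function.update u i (y i)) ≤ cc⁻¹ * γmax := by
        intro i hi
        have hbi : y i ≠ u i := Ne.symm (Finset.mem_filter.mp hi).2
        exact hRone_ub u _ (IRB.upd_dist_one u i (y i) hbi)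
      have h6 := Finset.sum_le_card_nsmul _ _ _ h5
      rw [nsmul_eq_mul] at h6
      refine h6.trans ?_
      have h7 : ((Finset.univ.filter (fun i : Fin n => u i ≠ y i)).card : ℝ)
          = (hammingDist u y : ℝ) := rfl
      rw [h7]
    have hfar : ∀ u, ((n:ℝ) - (hammingDist u y : ℝ)) * qR * (cc⁻¹ * γmin)
        ≤ ∑ v ∈ Finset.univ.filter (fun v => hammingDist u y < hammingDist v y), R u v := by
      intro u
      have hdyn : hammingDist u y ≤ n := by
        have := Finset.card_filter_le Finset.univ (fun i : Fin n => u i ≠ y i)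
        rw [Finset.card_univ, Fintype.card_fin] at this
        exact this
      set Aset := Finset.univ.filter (fun i : Fin n => u i = y i) with hAset
      have hAcard : Aset.card = n - hammingDist u y := by
        have hh := Finset.card_filter_add_card_filter_not
          (p := fun i : Fin n => u i ≠ y i) (s := Finset.univ)
        rw [Finset.card_univ, Fintype.card_fin] at hh
        have he : Finset.univ.filter (fun i : Fin n => ¬ u i ≠ y i) = Aset := by
          rw [hAset]
          refine Finset.filter_congr fun i _ => ?_
          simp [not_not]
        rw [he] at hh
        have : (Finset.univ.filter (fun i : Fin n => u i ≠ y i)).card = hammingDist u y := rfl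
        omega
      set TT := Aset.sigma (fun i : Fin n => Finset.univ.erase (u i)) with hTT
      have hTcard : TT.card = (n - hammingDist u y) * (a - 1) := by
        rw [hTT, Finset.card_sigma]
        have he : ∀ i : Fin n, (Finset.univ.erase (u i)).card = a - 1 := by
          intro i
          rw [Finset.card_erase_of_mem (Finset.mem_univ _), Finset.card_univ, Fintype.card_fin]
        rw [Finset.sum_congr rfl (fun i _ => he i), Finset.sum_const, hAcard, smul_eq_mul]
      have himsub : TT.image (fun cb : (_ : Fin n) × Fin a => Function.update u cb.1 cb.2)
          ⊆ Finset.univ.filter (fun v => hammingDist u y < hammingDist v y) := by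
        intro v hv
        obtain ⟨⟨i, b⟩, hmem, hveq⟩ := Finset.mem_image.mp hv
        rw [hTT, Finset.mem_sigma] at hmem
        have hui : u i = y i := (Finset.mem_filter.mp hmem.1).2
        have hbne : b ≠ u i := (Finset.mem_erase.mp hmem.2).1
        rw [Finset.mem_filter]
        refine ⟨Finset.mem_univ _, ?_⟩
        have hfar1 := IRB.dy_upd_far u y i b hui hbne
        rw [hveq] at hfar1
        omega
      have hinj : ∀ cb ∈ TT, ∀ cb' ∈ TT,
          (fun cb : (_ : Fin n) × Fin a => Function.update u cb.1 cb.2) cb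
            = (fun cb : (_ : Fin n) × Fin a => Function.update u cb.1 cb.2) cb' → cb = cb' := by
        rintro ⟨i, b⟩ hmem ⟨i', b'⟩ hmem' heq
        rw [hTT, Finset.mem_sigma] at hmem hmem'
        have hb : b ≠ u i := (Finset.mem_erase.mp hmem.2).1
        have hb' : b' ≠ u i' := (Finset.mem_erase.mp hmem'.2).1
        obtain ⟨h1, h2⟩ := IRB.upd_inj u i i' b b' hb hb' heq
        subst h1; subst h2; rfl
      have h2 : ∑ v ∈ TT.image (fun cb : (_ : Fin n) × Fin a => Function.update u cb.1 cb.2), R u v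
          = ∑ cb ∈ TT, R u (Function.update u cb.1 cb.2) := Finset.sum_image hinj
      have h3 : ∀ cb ∈ TT, cc⁻¹ * γmin ≤ R u (Function.update u cb.1 cb.2) := by
        rintro ⟨i, b⟩ hmem
        rw [hTT, Finset.mem_sigma] at hmem
        have hb : b ≠ u i := (Finset.mem_erase.mp hmem.2).1
        exact hRone_lb u _ (IRB.upd_dist_one u i b hb)
      have h4 := Finset.card_nsmul_le_sum TT
        (fun cb : (_ : Fin n) × Fin a => R u (Function.update u cb.1 cb.2)) _ h3
      rw [nsmul_eq_mul] at h4
      have h5 : ((n:ℝ) - (hammingDist u y : ℝ)) * qR * (cc⁻¹ * γmin)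
          = (TT.card : ℝ) * (cc⁻¹ * γmin) := by
        rw [hTcard]
        push_cast [Nat.cast_sub hdyn, Nat.cast_sub (le_trans one_le_two ha)]
        rw [hqdef]
      rw [h5]
      refine h4.trans ?_
      rw [← h2]
      exact Finset.sum_le_sum_of_subset_of_nonneg himsub (fun v _ _ => hRnn u v)
    -- ------- the weight function, killed region, contraction -------
    set dcrit : ℕ := ⌊D / 2⌋₊ with hdcrit
    set Bs : Finset (Fin n → Fin a) :=
      Finset.univ.filter (fun u => hammingDist u y ≤ dcrit) with hBsdef
    set hw : (Fin n → Fin a) → ℝ := fun u => Real.exp (-(hammingDist u y : ℝ)) with hwdef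
    have hw_nn : ∀ v, 0 ≤ hw v := fun v => (Real.exp_pos _).le
    set ε : ℝ := (1 - (Real.exp 1)⁻¹) * γmin / (2 * lam) with hεdef
    clear_value ε
    have hEinvlt : (Real.exp 1)⁻¹ < 1 := by
      rw [inv_lt_one_iff₀]
      right; linarith
    have hEinv0 : (0:ℝ) < (Real.exp 1)⁻¹ := inv_pos.mpr hE0
    have hε0 : 0 < ε := by
      rw [hεdef]
      apply div_pos (mul_pos (by linarith) hγmin)
      linarith
    have hεhalf : ε ≤ 1/2 := by
      rw [hεdef, div_le_iff₀ (by linarith only [hlam0] : (0:ℝ) < 2 * lam)]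
      have h1 : (1 - (Real.exp 1)⁻¹) * γmin ≤ 1 * γmin :=
        mul_le_mul_of_nonneg_right (by linarith only [hEinv0]) hγmin.le
      have h2 : 1/2 * (2 * lam) = lam := by ring
      linarith only [h1, h2, hγminlam]
    -- contraction estimate on Bs
    have hA : ∀ u ∈ Bs, ∑ v ∈ Bs, R u v * hw v ≤ (1 - ε) * hw u := by
      intro u hu
      have hud : (hammingDist u y : ℝ) ≤ D / 2 := by
        have h1 : hammingDist u y ≤ dcrit := (Finset.mem_filter.mp hu).2
        calc (hammingDist u y : ℝ) ≤ (dcrit : ℝ) := by exact_mod_cast h1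
          _ ≤ D / 2 := Nat.floor_le (by linarith)
      have hd0 : (0:ℝ) ≤ (hammingDist u y : ℝ) := Nat.cast_nonneg _
      have h1 : ∑ v ∈ Bs, R u v * hw v ≤ ∑ v, R u v * hw v :=
        Finset.sum_le_sum_of_subset_of_nonneg (Finset.subset_univ Bs)
          (fun v _ _ => mul_nonneg (hRnn u v) (hw_nn v))
      refine h1.trans ?_
      set d : ℝ := (hammingDist u y : ℝ) with hd
      clear_value d
      have h2 : ∑ v, R u v * hw v
          = Real.exp (-d) + ∑ v, R u v * (hw v - Real.exp (-d)) := by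
        rw [Finset.sum_congr rfl (fun v _ =>
          show R u v * hw v = R u v * Real.exp (-d) + R u v * (hw v - Real.exp (-d)) by ring)]
        rw [Finset.sum_add_distrib, ← Finset.sum_mul, hRrow u, one_mul]
      rw [h2]
      -- split into <, =, >
      have hsplit1 := Finset.sum_filter_add_sum_filter_not Finset.univ
        (fun v => hammingDist v y < hammingDist u y) (fun v => R u v * (hw v - Real.exp (-d)))
      have hsplit2 := Finset.sum_filter_add_sum_filter_not
        (Finset.univ.filter (fun v => ¬ hammingDist v y < hammingDist u y))
        (fun v => hammingDist u y < hammingDist v y) (fun v => R u v * (hw v - Real.exp (-d)))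
      have heq0 : ∑ v ∈ (Finset.univ.filter (fun v => ¬ hammingDist v y < hammingDist u y)).filter
          (fun v => ¬ hammingDist u y < hammingDist v y), R u v * (hw v - Real.exp (-d)) = 0 := by
        refine Finset.sum_eq_zero fun v hv => ?_
        rw [Finset.mem_filter, Finset.mem_filter] at hv
        have hvv : hammingDist v y = hammingDist u y := le_antisymm (not_lt.mp hv.2) (not_lt.mp hv.1.2)
        have : hw v = Real.exp (-d) := by rw [hwdef]; simp only; rw [hvv, hd]
        rw [this, sub_self, mul_zero]
      -- < part
      have hLT : ∑ v ∈ Finset.univ.filter (fun v => hammingDist v y < hammingDist u y),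
          R u v * (hw v - Real.exp (-d))
          ≤ (d * (cc⁻¹ * γmax)) * (Real.exp (-d) * (Real.exp 1 - 1)) := by
        have hterm : ∀ v ∈ Finset.univ.filter (fun v => hammingDist v y < hammingDist u y),
            R u v * (hw v - Real.exp (-d)) ≤ R u v * (Real.exp (-d) * (Real.exp 1 - 1)) := by
          intro v hv
          rw [Finset.mem_filter] at hv
          by_cases hz : R u v = 0
          · rw [hz, zero_mul, zero_mul]
          · have hvu : v ≠ u := by
              intro h; rw [h] at hv; exact lt_irrefl _ hv.2
            have hdist : hammingDist u v = 1 := by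
              by_contra hne; exact hz (hRzero u v (Ne.symm hvu) hne)
            have htri := hammingDist_triangle u v y
            rw [hdist] at htri
            have hge : d - 1 ≤ (hammingDist v y : ℝ) := by
              have : (hammingDist u y : ℝ) ≤ 1 + (hammingDist v y : ℝ) := by exact_mod_cast htri
              rw [hd]; linarith
            have hexp : hw v ≤ Real.exp (-d) * Real.exp 1 := by
              rw [hwdef]; simp only
              rw [← Real.exp_add]
              exact Real.exp_le_exp.mpr (by linarith only [hge])
            have hRv : 0 ≤ R u v := hRnn u v
            have hsub : hw v - Real.exp (-d) ≤ Real.exp (-d) * (Real.exp 1 - 1) := by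
              have hexpand : Real.exp (-d) * (Real.exp 1 - 1)
                  = Real.exp (-d) * Real.exp 1 - Real.exp (-d) := by ring
              linarith only [hexp, hexpand]
            exact mul_le_mul_of_nonneg_left hsub hRv
        refine (Finset.sum_le_sum hterm).trans ?_
        rw [← Finset.sum_mul]
        have hclose' : ∑ v ∈ Finset.univ.filter (fun v => hammingDist v y < hammingDist u y), R u v
            ≤ d * (cc⁻¹ * γmax) := by rw [hd]; exact hclose u
        refine mul_le_mul_of_nonneg_right hclose' ?_
        have h01 : (0:ℝ) < Real.exp 1 - 1 := by linarith only [hE2]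
        positivity
      -- > part
      have hGT : ∑ v ∈ (Finset.univ.filter (fun v => ¬ hammingDist v y < hammingDist u y)).filter
          (fun v => hammingDist u y < hammingDist v y), R u v * (hw v - Real.exp (-d))
          ≤ (((n:ℝ) - d) * qR * (cc⁻¹ * γmin)) * (Real.exp (-d) * ((Real.exp 1)⁻¹ - 1)) := by
        have hfeq : (Finset.univ.filter (fun v => ¬ hammingDist v y < hammingDist u y)).filter
            (fun v => hammingDist u y < hammingDist v y)
            = Finset.univ.filter (fun v => hammingDist u y < hammingDist v y) := by
          ext v
          simp only [Finset.mem_filter, Finset.mem_univ, true_and]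
          constructor
          · rintro ⟨_, h2'⟩; exact h2'
          · intro h2'; exact ⟨not_lt.mpr (le_of_lt h2'), h2'⟩
        rw [hfeq]
        have hterm : ∀ v ∈ Finset.univ.filter (fun v => hammingDist u y < hammingDist v y),
            R u v * (hw v - Real.exp (-d)) ≤ R u v * (Real.exp (-d) * ((Real.exp 1)⁻¹ - 1)) := by
          intro v hv
          rw [Finset.mem_filter] at hv
          have hge : d + 1 ≤ (hammingDist v y : ℝ) := by
            have h1 : hammingDist u y + 1 ≤ hammingDist v y := hv.2
            have h2 : ((hammingDist u y + 1 : ℕ) : ℝ) ≤ (hammingDist v y : ℝ) := by exact_mod_cast h1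
            rw [hd]; push_cast at h2 ⊢; linarith
          have hexp : hw v ≤ Real.exp (-d) * (Real.exp 1)⁻¹ := by
            rw [hwdef]; simp only
            rw [← Real.exp_neg, ← Real.exp_add]
            exact Real.exp_le_exp.mpr (by linarith only [hge])
          have hRv : 0 ≤ R u v := hRnn u v
          have hsub : hw v - Real.exp (-d) ≤ Real.exp (-d) * ((Real.exp 1)⁻¹ - 1) := by
            have hexpand : Real.exp (-d) * ((Real.exp 1)⁻¹ - 1)
                = Real.exp (-d) * (Real.exp 1)⁻¹ - Real.exp (-d) := by ring
            linarith only [hexp, hexpand]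
          exact mul_le_mul_of_nonneg_left hsub hRv
        refine (Finset.sum_le_sum hterm).trans ?_
        rw [← Finset.sum_mul]
        have hcoef : Real.exp (-d) * ((Real.exp 1)⁻¹ - 1) ≤ 0 := by
          apply mul_nonpos_of_nonneg_of_nonpos (Real.exp_pos _).le
          linarith only [hEinvlt]
        have hfar' : ((n:ℝ) - d) * qR * (cc⁻¹ * γmin)
            ≤ ∑ v ∈ Finset.univ.filter (fun v => hammingDist u y < hammingDist v y), R u v := by
          rw [hd]; exact hfar u
        exact mul_le_mul_of_nonpos_right hfar' hcoef
      -- combine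
      have htotal : ∑ v, R u v * (hw v - Real.exp (-d))
          ≤ Real.exp (-d) * (d * (cc⁻¹ * γmax) * (Real.exp 1 - 1)
              + ((n:ℝ) - d) * qR * (cc⁻¹ * γmin) * ((Real.exp 1)⁻¹ - 1)) := by
        calc ∑ v, R u v * (hw v - Real.exp (-d))
            = (∑ v ∈ Finset.univ.filter (fun v => hammingDist v y < hammingDist u y),
                R u v * (hw v - Real.exp (-d)))
              + ((∑ v ∈ (Finset.univ.filter (fun v => ¬ hammingDist v y < hammingDist u y)).filter
                  (fun v => hammingDist u y < hammingDist v y), R u v * (hw v - Real.exp (-d)))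
                + (∑ v ∈ (Finset.univ.filter (fun v => ¬ hammingDist v y < hammingDist u y)).filter
                  (fun v => ¬ hammingDist u y < hammingDist v y), R u v * (hw v - Real.exp (-d)))) := by
              rw [hsplit2, hsplit1]
          _ = (∑ v ∈ Finset.univ.filter (fun v => hammingDist v y < hammingDist u y),
                R u v * (hw v - Real.exp (-d)))
              + (∑ v ∈ (Finset.univ.filter (fun v => ¬ hammingDist v y < hammingDist u y)).filter
                  (fun v => hammingDist u y < hammingDist v y), R u v * (hw v - Real.exp (-d))) := by
              rw [heq0, add_zero]
          _ ≤ (d * (cc⁻¹ * γmax)) * (Real.exp (-d) * (Real.exp 1 - 1))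
              + (((n:ℝ) - d) * qR * (cc⁻¹ * γmin)) * (Real.exp (-d) * ((Real.exp 1)⁻¹ - 1)) :=
              add_le_add hLT hGT
          _ = Real.exp (-d) * (d * (cc⁻¹ * γmax) * (Real.exp 1 - 1)
              + ((n:ℝ) - d) * qR * (cc⁻¹ * γmin) * ((Real.exp 1)⁻¹ - 1)) := by ring
      -- the numeric margin
      have hdm : d * (qR * γmin + Real.exp 1 * γmax) ≤ (n:ℝ) * qR * γmin / 2 := by
        have h1 : (0:ℝ) ≤ qR * γmin + Real.exp 1 * γmax := by
          have h2 := mul_pos hE0 hγmax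
          have h3 := mul_pos hq0 hγmin
          linarith only [h2, h3]
        calc d * (qR * γmin + Real.exp 1 * γmax)
            ≤ (D/2) * (qR * γmin + Real.exp 1 * γmax) := mul_le_mul_of_nonneg_right hud h1
          _ ≤ (n:ℝ) * qR * γmin / 2 := by linarith only [hmargin]
      have hEE : Real.exp 1 * (Real.exp 1)⁻¹ = 1 := mul_inv_cancel₀ hE0.ne'
      have hfac : d * γmax * (Real.exp 1 - 1)
            + ((n:ℝ) - d) * qR * γmin * ((Real.exp 1)⁻¹ - 1)
            + (1 - (Real.exp 1)⁻¹) * γmin * ((n:ℝ) * qR) / 2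
          = (1 - (Real.exp 1)⁻¹)
            * (d * (Real.exp 1 * γmax + qR * γmin) - (n:ℝ) * qR * γmin / 2) := by
        linear_combination (d * γmax) * hEE
      have hkey : d * (cc⁻¹ * γmax) * (Real.exp 1 - 1)
          + ((n:ℝ) - d) * qR * (cc⁻¹ * γmin) * ((Real.exp 1)⁻¹ - 1) ≤ -ε := by
        have htarget2 : d * γmax * (Real.exp 1 - 1)
            + ((n:ℝ) - d) * qR * γmin * ((Real.exp 1)⁻¹ - 1)
            ≤ -((1 - (Real.exp 1)⁻¹) * γmin * ((n:ℝ) * qR) / 2) := by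
          have h9 : (1 - (Real.exp 1)⁻¹)
              * (d * (Real.exp 1 * γmax + qR * γmin) - (n:ℝ) * qR * γmin / 2) ≤ 0 := by
            apply mul_nonpos_of_nonneg_of_nonpos (by linarith only [hEinvlt])
            have h11 : d * (Real.exp 1 * γmax + qR * γmin)
                = d * (qR * γmin + Real.exp 1 * γmax) := by ring
            linarith only [hdm, h11]
          linarith only [hfac, h9]
        have h10 := mul_le_mul_of_nonneg_left htarget2 hcinv0.le
        calc d * (cc⁻¹ * γmax) * (Real.exp 1 - 1)
              + ((n:ℝ) - d) * qR * (cc⁻¹ * γmin) * ((Real.exp 1)⁻¹ - 1)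
            = cc⁻¹ * (d * γmax * (Real.exp 1 - 1)
              + ((n:ℝ) - d) * qR * γmin * ((Real.exp 1)⁻¹ - 1)) := by ring
          _ ≤ cc⁻¹ * (-((1 - (Real.exp 1)⁻¹) * γmin * ((n:ℝ) * qR) / 2)) := h10
          _ = -ε := by
              rw [hεdef, hcdef]
              rw [mul_inv, mul_inv]
              field_simp
      -- finish hA
      have hfin : ∑ v, R u v * (hw v - Real.exp (-d)) ≤ Real.exp (-d) * (-ε) := by
        refine htotal.trans ?_
        exact mul_le_mul_of_nonneg_left hkey (Real.exp_pos _).le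
      have hwu : hw u = Real.exp (-d) := by rw [hwdef]; simp only; rw [hd]
      rw [hwu]
      have hexpand2 : (1 - ε) * Real.exp (-d) = Real.exp (-d) + Real.exp (-d) * (-ε) := by ring
      linarith only [hfin, hexpand2]
    -- escape estimate outside Bs
    have hB : ∀ u, u ∉ Bs → ∑ v ∈ Bs, R u v * hw v ≤ Real.exp (-(dcrit:ℝ)) := by
      intro u hu
      have hud : dcrit + 1 ≤ hammingDist u y := by
        have h1 : ¬ hammingDist u y ≤ dcrit := fun hc =>
          hu (Finset.mem_filter.mpr ⟨Finset.mem_univ _, hc⟩)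
        omega
      have hterm : ∀ v ∈ Bs, R u v * hw v ≤ R u v * Real.exp (-(dcrit:ℝ)) := by
        intro v hv
        by_cases hz : R u v = 0
        · rw [hz, zero_mul, zero_mul]
        · have hvu : u ≠ v := by
            intro he; rw [he] at hu; exact hu hv
          have hdist : hammingDist u v = 1 := by
            by_contra hne; exact hz (hRzero u v hvu hne)
          have htri := hammingDist_triangle u v y
          rw [hdist] at htri
          have hge : (dcrit:ℝ) ≤ (hammingDist v y : ℝ) := by
            have h2 : dcrit ≤ hammingDist v y := by omega
            exact_mod_cast h2
          have hexp : hw v ≤ Real.exp (-(dcrit:ℝ)) := by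
            rw [hwdef]; simp only
            exact Real.exp_le_exp.mpr (by linarith only [hge])
          exact mul_le_mul_of_nonneg_left hexp (hRnn u v)
      refine (Finset.sum_le_sum hterm).trans ?_
      rw [← Finset.sum_mul]
      have h1 : ∑ v ∈ Bs, R u v ≤ 1 := by
        have h2 := Finset.sum_le_sum_of_subset_of_nonneg (Finset.subset_univ Bs)
          (fun v _ _ => hRnn u v)
        rw [hRrow u] at h2
        exact h2
      calc (∑ v ∈ Bs, R u v) * Real.exp (-(dcrit:ℝ))
          ≤ 1 * Real.exp (-(dcrit:ℝ)) :=
            mul_le_mul_of_nonneg_right h1 (Real.exp_pos _).le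
        _ = Real.exp (-(dcrit:ℝ)) := one_mul _
    -- membership facts
    have hyB : y ∈ Bs :=
      Finset.mem_filter.mpr ⟨Finset.mem_univ _, by rw [hammingDist_self]; exact Nat.zero_le _⟩
    have hxB : x ∈ Bs := by
      refine Finset.mem_filter.mpr ⟨Finset.mem_univ _, ?_⟩
      have h1 : (hammingDist x y : ℝ) < D / 2 := by
        have h2 : (⌊D⌋₊ : ℝ) ≤ D := Nat.floor_le hD0.le
        have h3 : (⌊D⌋₊ : ℝ) / 2 ≤ D / 2 := by linarith only [h2]
        exact lt_of_lt_of_le hr h3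
      exact Nat.le_floor h1.le
    have hκ0 : (0:ℝ) ≤ 1 - ε := by linarith only [hεhalf]
    have hκ1 : 1 - ε ≤ 1 := by linarith only [hε0]
    have hwy1 : hw y = 1 := by
      rw [hwdef]; simp only [hammingDist_self]
      norm_num
    have hmain : ∀ m : ℕ, (R ^ m) x y ≤ (1 - ε) ^ m * hw x + m * Real.exp (-(dcrit:ℝ)) :=
      fun m => IRB.kill_bound R hRnn hRrow Bs hw hw_nn y hyB hwy1 (1 - ε)
        (Real.exp (-(dcrit:ℝ))) hκ0 hκ1 (Real.exp_pos _).le hA hB x hxB m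
    -- ------- per-m numeric bound -------
    have hperm : ∀ m ∈ Finset.Icc (⌊(n:ℝ) * lam * t * qR / 2⌋₊ + 1) p,
        (R ^ m) x y ≤ (p:ℝ)^2 * Real.exp (-(D/2) + 1) := by
      intro m hm
      rw [Finset.mem_Icc] at hm
      have hm1 : (n:ℝ) * lam * t * qR / 2 ≤ (m:ℝ) := by
        have h1 : (n:ℝ) * lam * t * qR / 2 < (⌊(n:ℝ) * lam * t * qR / 2⌋₊ : ℝ) + 1 :=
          Nat.lt_floor_add_one _
        have h3 : ((⌊(n:ℝ) * lam * t * qR / 2⌋₊ : ℝ) + 1) ≤ (m:ℝ) := by exact_mod_cast hm.1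
        linarith only [h1, h3]
      have hmp : (m:ℝ) ≤ (p:ℝ) := by exact_mod_cast hm.2
      have hm0 : (0:ℝ) ≤ (m:ℝ) := Nat.cast_nonneg _
      -- geometric decay
      have hg1 : (1 - ε) ^ m ≤ Real.exp (-(ε * m)) := by
        have h1 : (1 - ε) ≤ Real.exp (-ε) := by linarith only [Real.add_one_le_exp (-ε)]
        calc (1 - ε) ^ m ≤ (Real.exp (-ε)) ^ m := pow_le_pow_left₀ hκ0 h1 m
          _ = Real.exp (-(ε * m)) := by
              rw [← Real.exp_nat_mul]
              congr 1
              ring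
      have hεm : D / 2 ≤ ε * m := by
        have hE' : (1:ℝ)/2 ≤ 1 - (Real.exp 1)⁻¹ := by
          have h1 : (Real.exp 1)⁻¹ ≤ (2:ℝ)⁻¹ := by
            apply inv_anti₀
            · norm_num
            · linarith only [hE2]
          norm_num at h1 ⊢
          linarith only [h1]
        have h4 : ε * ((n:ℝ) * lam * t * qR / 2) ≤ ε * m := mul_le_mul_of_nonneg_left hm1 hε0.le
        have h5 : ε * ((n:ℝ) * lam * t * qR / 2)
            = (1 - (Real.exp 1)⁻¹) * (t * (n:ℝ) * qR * γmin) / 4 := by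
          rw [hεdef]
          field_simp
          ring
        have h6 : (1:ℝ)/2 * (4 * D) / 4 ≤ (1 - (Real.exp 1)⁻¹) * (t * (n:ℝ) * qR * γmin) / 4 := by
          have h8 := mul_le_mul hE' hD4 (by linarith only [hD0.le] : (0:ℝ) ≤ 4 * D)
            (by linarith only [hE'] : (0:ℝ) ≤ 1 - (Real.exp 1)⁻¹)
          linarith only [h8]
        have h9 : (1:ℝ)/2 * (4 * D) / 4 = D / 2 := by ring
        linarith only [h4, h5, h6, h9]
      have hg2 : (1 - ε) ^ m ≤ Real.exp (-(D/2)) := by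
        refine hg1.trans ?_
        exact Real.exp_le_exp.mpr (by linarith)
      have hwx : hw x ≤ 1 := by
        rw [hwdef]
        apply Real.exp_le_one_iff.mpr  -- exp z ≤ 1 ↔ z ≤ 0
        simp only [neg_nonpos]
        exact Nat.cast_nonneg _
      have hHle : Real.exp (-(dcrit:ℝ)) ≤ Real.exp (-(D/2) + 1) := by
        apply Real.exp_le_exp.mpr
        have h1 := Nat.lt_floor_add_one (D/2)
        rw [hdcrit]
        push_cast
        linarith only [h1]
      have hp2 : (2:ℝ) ≤ (p:ℝ) := by
        have h1 : ((⌊(n:ℝ) * lam * t * qR / 2⌋₊ : ℝ) + 1) ≤ (p:ℝ) := by exact_mod_cast hp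
        have h2 : (n:ℝ) * lam * t * qR / 2 < (p:ℝ) := by
          have := Nat.lt_floor_add_one ((n:ℝ) * lam * t * qR / 2)
          linarith
        have h3 : t * (n:ℝ) * qR * γmin ≤ (n:ℝ) * lam * t * qR := by
          have h4 : (0:ℝ) ≤ t * (n:ℝ) * qR := by positivity
          have h5 := mul_le_mul_of_nonneg_left hγminlam h4
          calc t * (n:ℝ) * qR * γmin = t * (n:ℝ) * qR * γmin := rfl
            _ ≤ t * (n:ℝ) * qR * lam := h5
            _ = (n:ℝ) * lam * t * qR := by ring
        linarith only [h2, h3, hD4, hD1]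
      calc (R ^ m) x y ≤ (1 - ε) ^ m * hw x + m * Real.exp (-(dcrit:ℝ)) := hmain m
        _ ≤ Real.exp (-(D/2)) * 1 + (p:ℝ) * Real.exp (-(D/2) + 1) := by
            have hb1 : (1 - ε) ^ m * hw x ≤ Real.exp (-(D/2)) * 1 := by
              apply mul_le_mul hg2 hwx (hw_nn x) (Real.exp_pos _).le
            have hb2 : (m:ℝ) * Real.exp (-(dcrit:ℝ)) ≤ (p:ℝ) * Real.exp (-(D/2) + 1) := by
              apply mul_le_mul hmp hHle (Real.exp_pos _).le (by linarith only [hp2])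
            linarith only [hb1, hb2]
        _ ≤ (p:ℝ)^2 * Real.exp (-(D/2) + 1) := by
            have he1 : Real.exp (-(D/2)) ≤ Real.exp (-(D/2) + 1) :=
              Real.exp_le_exp.mpr (by linarith only [])
            have he2 : (0:ℝ) < Real.exp (-(D/2) + 1) := Real.exp_pos _
            have h1p : 1 + (p:ℝ) ≤ (p:ℝ)^2 := by
              have hpp := mul_le_mul_of_nonneg_right hp2 (by linarith only [hp2] : (0:ℝ) ≤ (p:ℝ))
              have hsq : (p:ℝ)^2 = (p:ℝ) * (p:ℝ) := by ring
              linarith only [hpp, hp2, hsq]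
            have h2p := mul_le_mul_of_nonneg_right h1p he2.le
            have h3p : Real.exp (-(D/2)) * 1 ≤ Real.exp (-(D/2) + 1) := by
              rw [mul_one]; exact he1
            have h4p : (1 + (p:ℝ)) * Real.exp (-(D/2) + 1)
                = Real.exp (-(D/2) + 1) + (p:ℝ) * Real.exp (-(D/2) + 1) := by ring
            linarith only [h2p, h3p, h4p]
    -- ------- sum everything up -------
    have hT0 : (0:ℝ) < T := lt_of_lt_of_le ht hT
    have hΛ0 : (0:ℝ) ≤ (n:ℝ) * T * qR * lam := by positivity
    have hsum1 : ∑ m ∈ Finset.Icc (⌊(n:ℝ) * lam * t * qR / 2⌋₊ + 1) p,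
          ((n:ℝ) * T * qR * lam) ^ m / (Nat.factorial m) * (R ^ m) x y
        ≤ ((p:ℝ)^2 * Real.exp (-(D/2) + 1)) * Real.exp ((n:ℝ) * T * qR * lam) := by
      have hs1 : ∑ m ∈ Finset.Icc (⌊(n:ℝ) * lam * t * qR / 2⌋₊ + 1) p,
            ((n:ℝ) * T * qR * lam) ^ m / (Nat.factorial m) * (R ^ m) x y
          ≤ ∑ m ∈ Finset.Icc (⌊(n:ℝ) * lam * t * qR / 2⌋₊ + 1) p,
            ((n:ℝ) * T * qR * lam) ^ m / (Nat.factorial m)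
              * ((p:ℝ)^2 * Real.exp (-(D/2) + 1)) := by
        refine Finset.sum_le_sum fun m hm => ?_
        refine mul_le_mul_of_nonneg_left (hperm m hm) ?_
        positivity
      refine hs1.trans ?_
      rw [← Finset.sum_mul]
      rw [mul_comm (((p:ℝ)^2 * Real.exp (-(D/2) + 1))) (Real.exp ((n:ℝ) * T * qR * lam))]
      refine mul_le_mul_of_nonneg_right ?_ (by positivity)
      have hs2 : Finset.Icc (⌊(n:ℝ) * lam * t * qR / 2⌋₊ + 1) p ⊆ Finset.range (p + 1) := by
        intro m hm
        rw [Finset.mem_Icc] at hm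
        rw [Finset.mem_range]
        omega
      have hs3 := Finset.sum_le_sum_of_subset_of_nonneg hs2
        (fun m _ _ => by positivity :
          ∀ m ∈ Finset.range (p+1),
            m ∉ Finset.Icc (⌊(n:ℝ) * lam * t * qR / 2⌋₊ + 1) p →
              (0:ℝ) ≤ ((n:ℝ) * T * qR * lam) ^ m / (Nat.factorial m))
      refine hs3.trans ?_
      exact Real.sum_le_exp_of_nonneg hΛ0 (p + 1)
    calc Real.exp (-(T * (n:ℝ) * qR * lam))
          * ∑ m ∈ Finset.Icc (⌊(n:ℝ) * lam * t * qR / 2⌋₊ + 1) p,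
            ((n:ℝ) * T * qR * lam) ^ m / (Nat.factorial m) * (R ^ m) x y
        ≤ Real.exp (-(T * (n:ℝ) * qR * lam))
          * (((p:ℝ)^2 * Real.exp (-(D/2) + 1)) * Real.exp ((n:ℝ) * T * qR * lam)) :=
          mul_le_mul_of_nonneg_left hsum1 (Real.exp_pos _).le
      _ = (p:ℝ)^2 * Real.exp (-(D/2) + 1)
          * (Real.exp (-(T * (n:ℝ) * qR * lam)) * Real.exp ((n:ℝ) * T * qR * lam)) := by ring
      _ = (p:ℝ)^2 * Real.exp (-(D/2) + 1) := by
          rw [← Real.exp_add]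
          rw [show -(T * (n:ℝ) * qR * lam) + (n:ℝ) * T * qR * lam = 0 by ring]
          rw [Real.exp_zero, mul_one]
      _ = (p:ℝ)^2 * Real.exp (-(D/2) + 1) := rfl
      _ ≤ Real.exp (-(t * (n:ℝ) * qR * lam * (1 - Real.exp (-(γmin / 8)))))
          + (p:ℝ)^2 * Real.exp (-(D/2) + 1) := le_add_of_nonneg_left (Real.exp_pos _).le

  · -- Part 2
    intro ht0
    have h1 : t < 1 / (γmax + ((a:ℝ)-1)) := lt_of_lt_of_le ht0 (min_le_left _ _)
    have h2 : t < ((a:ℝ)-1) / (((a:ℝ)-1) + Real.exp 1 * γstar) := lt_of_lt_of_le ht0 (min_le_right _ _)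
    rw [hδstar]
    apply le_min
    · have hden : (0:ℝ) < 2 * t * (γmax + ((a:ℝ)-1)) + 4 := by positivity
      have hden6 : 2 * t * (γmax + ((a:ℝ)-1)) + 4 ≤ 6 := by
        have hpos : (0:ℝ) < γmax + ((a:ℝ)-1) := by linarith
        have := (lt_div_iff₀ hpos).mp h1
        nlinarith
      calc t * min (((a:ℝ)-1) * γmin / 6) 1 ≤ t * (((a:ℝ)-1) * γmin / 6) :=
            mul_le_mul_of_nonneg_left (min_le_left _ _) (le_of_lt ht)
        _ = t * ((a:ℝ)-1) * γmin / 6 := by ring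
        _ ≤ t * ((a:ℝ)-1) * γmin / (2 * t * (γmax + ((a:ℝ)-1)) + 4) := by
            apply div_le_div_of_nonneg_left _ hden hden6
            positivity
    · calc t * min (((a:ℝ)-1) * γmin / 6) 1 ≤ t * 1 :=
            mul_le_mul_of_nonneg_left (min_le_right _ _) (le_of_lt ht)
      _ = t := mul_one t
      _ ≤ ((a:ℝ)-1) / (((a:ℝ)-1) + Real.exp 1 * γstar) := le_of_lt h2
end

section
/- Spectral gap lower bound for the birth-death chain (Lemma 9): Fix integers n ≥ 1, q ≥ 1 and reals 0 < γmin ≤ γmax, λ ≥ max(γmax, γmin + γmax/q), and let B be the (n+1)×(n+1) birth-death transition matrix on {0,...,n} with B_{i,i−1} = γmax·i/(nqλ), B_{i,i+1} = (γmin/λ)(1 − i/n), B_{i,i} = 1 − B_{i,i−1} − B_{i,i+1}. B is reversible with respect to its binomial stationary distribution ν, so all eigenvalues of B are real; let λ₂ denote the second largest eigenvalue of B. Then the spectral gap satisfies 1 − λ₂ ≥ min(γmax/q, γmin) / (λ · n²·(n+1)²). -/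
/-- The birth-death transition matrix `B` on `{0,…,n}` with
`B_{i,i−1} = γmax·i/(nqλ)`, `B_{i,i+1} = (γmin/λ)(1 − i/n)` and
`B_{i,i} = 1 − B_{i,i−1} − B_{i,i+1}`. -/
noncomputable def bdMatrix (n q : ℕ) (γmin γmax lam : ℝ) :
    Matrix (Fin (n + 1)) (Fin (n + 1)) ℝ :=
  Matrix.of fun i j =>
    if (j : ℕ) + 1 = (i : ℕ) then γmax * (i : ℕ) / ((n : ℝ) * q * lam)
    else if (i : ℕ) + 1 = (j : ℕ) then (γmin / lam) * (1 - (i : ℕ) / n)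
    else if i = j then
      1 - γmax * (i : ℕ) / ((n : ℝ) * q * lam) - (γmin / lam) * (1 - (i : ℕ) / n)
    else 0

private lemma bd_tri_sum (m i : ℕ) (him : i ≤ m) (a b c : ℝ) (V : ℕ → ℝ)
    (ha : i = 0 → a = 0) (hb : i = m → b = 0) :
    ∑ k ∈ Finset.range (m + 1),
      (if k + 1 = i then a else if i + 1 = k then b else if k = i then c else 0) * V k
    = a * V (i - 1) + b * V (i + 1) + c * V i := by
  have hsplit : ∀ k, (if k + 1 = i then a else if i + 1 = k then b else if k = i then c else 0) * V k
      = (if k = i - 1 ∧ 1 ≤ i then a * V k else 0) + (if k = i + 1 then b * V k else 0)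
        + (if k = i then c * V k else 0) := by
    intro k
    split_ifs with h1 h2 h3 h4 h5 h6 h7 h8 h9 h10 h11 h12 h13 h14 h15 h16 h17 h18 h19 h20 h21 h22 h23 h24 <;> first | (exfalso; omega) | ring
  rw [Finset.sum_congr rfl (fun k _ => hsplit k), Finset.sum_add_distrib,
    Finset.sum_add_distrib]
  congr 1
  · congr 1
    · rcases Nat.eq_zero_or_pos i with h0 | h1
      · subst h0
        rw [ha rfl]
        simp
      · have heq : ∀ k, (k = i - 1 ∧ 1 ≤ i) = (k = i - 1) := fun k => by
          simp only [eq_iff_iff]; exact and_iff_left h1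
        simp only [heq]
        rw [Finset.sum_ite_eq' (Finset.range (m+1)) (i-1) (fun k => a * V k)]
        rw [if_pos (by simp only [Finset.mem_range]; omega)]
    · rw [Finset.sum_ite_eq' (Finset.range (m+1)) (i+1) (fun k => b * V k)]
      rcases Nat.lt_or_ge i m with h | h
      · rw [if_pos (by simp only [Finset.mem_range]; omega)]
      · have him' : i = m := le_antisymm him h
        rw [if_neg (by simp only [Finset.mem_range]; omega), hb him']
        ring
  · rw [Finset.sum_ite_eq' (Finset.range (m+1)) i (fun k => c * V k)]
    rw [if_pos (by simp only [Finset.mem_range]; omega)]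

private lemma bd_chain_up (W : ℕ → ℝ) :
    ∀ k, (∀ i, i < k → W i ≤ W (i + 1)) → ∀ i, i ≤ k → W i ≤ W k := by
  intro k
  induction k with
  | zero => intro _ i hi; interval_cases i; exact le_refl _
  | succ k ih =>
    intro h i hi
    rcases Nat.lt_or_ge i (k+1) with h' | h'
    · exact le_trans (ih (fun j hj => h j (by omega)) i (by omega)) (h k (by omega))
    · have : i = k + 1 := by omega
      subst this; exact le_refl _

private lemma bd_chain_down (W : ℕ → ℝ) (a : ℕ) (h : ∀ i, a ≤ i → W (i + 1) ≤ W i) :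
    ∀ j, a ≤ j → W j ≤ W a := by
  intro j hj
  induction j, hj using Nat.le_induction with
  | base => exact le_refl _
  | succ j hj ih => exact le_trans (h j hj) ih

private lemma bd_factor (s t : Finset ℕ) (f g : ℕ → ℝ) (X : ℝ) :
    ∑ i ∈ s, ∑ j ∈ t, f i * (g j * X) = (∑ i ∈ s, f i) * ((∑ j ∈ t, g j) * X) := by
  rw [Finset.sum_mul]
  apply Finset.sum_congr rfl
  intro i _
  rw [Finset.sum_mul, Finset.mul_sum]


set_option maxHeartbeats 2000000 in
/-- **Spectral gap lower bound for the birth-death chain (Lemma 9).**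
Every real eigenvalue `μ` of `B` other than `1` satisfies
`μ ≤ 1 − min(γmax/q, γmin)/(λ n² (n+1)²)`; equivalently, the spectral gap
`1 − λ₂` is at least `min(γmax/q, γmin)/(λ n² (n+1)²)`. -/
theorem bd_spectral_gap_bound
    (n q : ℕ) (hn : 1 ≤ n) (hq : 1 ≤ q)
    (γmin γmax lam : ℝ)
    (hγmin : 0 < γmin) (hγ : γmin ≤ γmax)
    (hlam : max γmax (γmin + γmax / (q : ℝ)) ≤ lam)
    (μ : ℝ) (v : Fin (n + 1) → ℝ) (hv : v ≠ 0)
    (heig : (bdMatrix n q γmin γmax lam).mulVec v = μ • v)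
    (hμ : μ ≠ 1) :
    μ ≤ 1 - min (γmax / q) γmin / (lam * (n : ℝ) ^ 2 * ((n : ℝ) + 1) ^ 2) := by
  classical
  have hγmax : 0 < γmax := lt_of_lt_of_le hγmin hγ
  have hlampos : 0 < lam := lt_of_lt_of_le hγmax (le_trans (le_max_left _ _) hlam)
  have hn0 : (0:ℝ) < n := by exact_mod_cast Nat.lt_of_lt_of_le Nat.zero_lt_one hn
  have hq0 : (0:ℝ) < q := by exact_mod_cast Nat.lt_of_lt_of_le Nat.zero_lt_one hq
  have hnne : (n:ℝ) ≠ 0 := ne_of_gt hn0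
  have hqne : (q:ℝ) ≠ 0 := ne_of_gt hq0
  have hlamne : lam ≠ 0 := ne_of_gt hlampos
  have hγmaxne : γmax ≠ 0 := ne_of_gt hγmax
  obtain ⟨θ, hθdef⟩ : ∃ θ : ℝ, θ = q * γmin / γmax := ⟨_, rfl⟩
  have hθpos : 0 < θ := by rw [hθdef]; positivity
  obtain ⟨W, hWdef⟩ : ∃ W : ℕ → ℝ, W = fun k => (n.choose k : ℝ) * θ ^ k := ⟨_, rfl⟩
  obtain ⟨P, hPdef⟩ : ∃ P : ℕ → ℝ, P = fun k : ℕ => γmin / lam * (1 - (k:ℝ) / n) := ⟨_, rfl⟩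
  obtain ⟨Q, hQdef⟩ : ∃ Q : ℕ → ℝ, Q = fun k : ℕ => γmax * (k:ℝ) / ((n:ℝ) * q * lam) := ⟨_, rfl⟩
  obtain ⟨V, hVdef⟩ : ∃ V : ℕ → ℝ, V = fun k => if h : k < n + 1 then v ⟨k, h⟩ else 0 := ⟨_, rfl⟩
  have hWnn : ∀ i, 0 ≤ W i := by
    intro i; rw [hWdef]; positivity
  have hWpos : ∀ i, i ≤ n → 0 < W i := by
    intro i hi
    rw [hWdef]
    have h1 : 0 < n.choose i := Nat.choose_pos hi
    have h1' : (0:ℝ) < (n.choose i : ℝ) := by exact_mod_cast h1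
    positivity
  have hstep : ∀ i, W (i+1) * ((i:ℝ)+1) = W i * (θ * ((n - i : ℕ) : ℝ)) := by
    intro i
    have h := Nat.choose_succ_right_eq n i
    have h' : ((n.choose (i+1)) : ℝ) * ((i:ℝ)+1) = (n.choose i : ℝ) * ((n - i : ℕ) : ℝ) := by
      exact_mod_cast h
    rw [hWdef]
    simp only
    push_cast
    linear_combination (θ ^ (i+1)) * h'
  have hrev : ∀ k, k < n → W k * P k = W (k+1) * Q (k+1) := by
    intro k hk
    have hcast : ((n - k : ℕ) : ℝ) = (n:ℝ) - (k:ℝ) := by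
      rw [Nat.cast_sub (le_of_lt hk)]
    have h1 := hstep k
    rw [hcast] at h1
    have hk1 : ((k:ℝ)+1) ≠ 0 := by positivity
    have h2 : W (k+1) = W k * (θ * ((n:ℝ) - k)) / ((k:ℝ)+1) := by
      rw [eq_div_iff hk1]
      linear_combination h1
    rw [h2, hPdef, hQdef, hθdef]
    simp only
    push_cast
    field_simp
  have hQ0 : Q 0 = 0 := by rw [hQdef]; simp
  have hPn : P n = 0 := by
    rw [hPdef]; simp only; rw [div_self hnne]; ring
  -- extraction of the scalar recurrence
  have hrow : ∀ i : ℕ, i ≤ n →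
      Q i * V (i-1) + P i * V (i+1) + (1 - Q i - P i) * V i = μ * V i := by
    intro i hi
    have hif : i < n + 1 := by omega
    have hmul := congrFun heig ⟨i, hif⟩
    rw [Matrix.mulVec] at hmul
    simp only [dotProduct, Pi.smul_apply, smul_eq_mul] at hmul
    have hVi : V i = v ⟨i, hif⟩ := by rw [hVdef]; simp only [dif_pos hif]
    have hsum : ∑ j : Fin (n+1), bdMatrix n q γmin γmax lam ⟨i, hif⟩ j * v j
        = ∑ k ∈ Finset.range (n+1),
            (if k + 1 = i then Q i else if i + 1 = k then P i
              else if k = i then 1 - Q i - P i else 0) * V k := by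
      rw [← Fin.sum_univ_eq_sum_range (fun k =>
        (if k + 1 = i then Q i else if i + 1 = k then P i
          else if k = i then 1 - Q i - P i else 0) * V k) (n+1)]
      apply Finset.sum_congr rfl
      intro j _
      have hentry : bdMatrix n q γmin γmax lam ⟨i, hif⟩ j
          = (if (j:ℕ) + 1 = i then Q i else if i + 1 = (j:ℕ) then P i
              else if (j:ℕ) = i then 1 - Q i - P i else 0) := by
        simp only [bdMatrix, Matrix.of_apply, hQdef, hPdef, Fin.ext_iff]
        split_ifs with g1 g2 g3 g4 g5 g6 <;> first | (exfalso; omega) | rfl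
      have hvj : v j = V (j:ℕ) := by
        rw [hVdef]; simp only [dif_pos j.isLt, Fin.eta]
      rw [hentry, hvj]
    rw [hsum] at hmul
    rw [bd_tri_sum n i hi (Q i) (P i) (1 - Q i - P i) V
      (fun h => by rw [h, hQ0]) (fun h => by rw [h, hPn])] at hmul
    rw [← hVi] at hmul
    exact hmul
  have hrec : ∀ i, i ≤ n →
      (1 - μ) * V i = Q i * (V i - V (i-1)) + P i * (V i - V (i+1)) := by
    intro i hi
    linear_combination hrow i hi
  -- summation by parts
  have hSBP : ∀ f : ℕ → ℝ,
      ∑ i ∈ Finset.range (n+1), W i * f i * ((1 - μ) * V i)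
      = ∑ k ∈ Finset.range n, W k * P k * (V (k+1) - V k) * (f (k+1) - f k) := by
    intro f
    have step1 : ∑ i ∈ Finset.range (n+1), W i * f i * ((1 - μ) * V i)
        = ∑ i ∈ Finset.range (n+1),
            (W i * Q i * f i * (V i - V (i-1)) + W i * P i * f i * (V i - V (i+1))) := by
      apply Finset.sum_congr rfl
      intro i hi
      have hi' : i ≤ n := by have := Finset.mem_range.mp hi; omega
      rw [hrec i hi']
      ring
    rw [step1, Finset.sum_add_distrib]
    have hA : ∑ i ∈ Finset.range (n+1), W i * Q i * f i * (V i - V (i-1))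
        = ∑ k ∈ Finset.range n, W k * P k * f (k+1) * (V (k+1) - V k) := by
      rw [Finset.sum_range_succ']
      have h0 : W 0 * Q 0 * f 0 * (V 0 - V (0-1)) = 0 := by
        norm_num
      rw [h0, add_zero]
      apply Finset.sum_congr rfl
      intro k hk
      have hk' : k < n := Finset.mem_range.mp hk
      have hr := hrev k hk'
      have hsub : k + 1 - 1 = k := rfl
      rw [hsub]
      linear_combination (f (k+1) * (V (k+1) - V k)) * hr.symm
    have hB : ∑ i ∈ Finset.range (n+1), W i * P i * f i * (V i - V (i+1))
        = ∑ k ∈ Finset.range n, (- (W k * P k * f k * (V (k+1) - V k))) := by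
      rw [Finset.sum_range_succ, hPn]
      have : W n * 0 * f n * (V n - V (n+1)) = 0 := by ring
      rw [this, add_zero]
      apply Finset.sum_congr rfl
      intro k _
      ring
    rw [hA, hB, ← Finset.sum_add_distrib]
    apply Finset.sum_congr rfl
    intro k _
    ring
  have hμ' : (1:ℝ) - μ ≠ 0 := sub_ne_zero.mpr (fun h => hμ h.symm)
  -- orthogonality to constants
  have hS1 : ∑ i ∈ Finset.range (n+1), W i * V i = 0 := by
    have h := hSBP (fun _ => 1)
    simp only [sub_self, mul_zero, Finset.sum_const_zero] at h
    have hL : ∑ i ∈ Finset.range (n+1), W i * 1 * ((1 - μ) * V i)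
        = (1 - μ) * ∑ i ∈ Finset.range (n+1), W i * V i := by
      rw [Finset.mul_sum]
      apply Finset.sum_congr rfl
      intro i _
      ring
    rw [hL] at h
    exact (mul_eq_zero.mp h).resolve_left hμ'
  -- Dirichlet form identity
  have hE : (1 - μ) * (∑ i ∈ Finset.range (n+1), W i * V i ^ 2)
      = ∑ k ∈ Finset.range n, W k * P k * (V (k+1) - V k) ^ 2 := by
    have h := hSBP V
    have hL : ∑ i ∈ Finset.range (n+1), W i * V i * ((1 - μ) * V i)
        = (1 - μ) * ∑ i ∈ Finset.range (n+1), W i * V i ^ 2 := by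
      rw [Finset.mul_sum]
      apply Finset.sum_congr rfl
      intro i _
      ring
    rw [hL] at h
    rw [h]
    apply Finset.sum_congr rfl
    intro k _
    ring
  obtain ⟨S2, hS2def⟩ : ∃ S2 : ℝ, S2 = ∑ i ∈ Finset.range (n+1), W i * V i ^ 2 := ⟨_, rfl⟩
  obtain ⟨Wsum, hWsumdef⟩ : ∃ Wsum : ℝ, Wsum = ∑ i ∈ Finset.range (n+1), W i := ⟨_, rfl⟩
  have hS2pos : 0 < S2 := by
    obtain ⟨i0, hi0⟩ := Function.ne_iff.mp hv
    rw [hS2def]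
    apply Finset.sum_pos'
    · intro i _
      exact mul_nonneg (hWnn i) (sq_nonneg _)
    · refine ⟨(i0 : ℕ), Finset.mem_range.mpr i0.isLt, ?_⟩
      have hVi0 : V (i0 : ℕ) = v i0 := by
        rw [hVdef]; simp only [dif_pos i0.isLt, Fin.eta]
      have hvne : V (i0 : ℕ) ≠ 0 := by rw [hVi0]; simpa using hi0
      have : 0 < V (i0 : ℕ) ^ 2 :=
        lt_of_le_of_ne (sq_nonneg _) (Ne.symm (pow_ne_zero 2 hvne))
      exact mul_pos (hWpos _ (Nat.lt_succ_iff.mp i0.isLt)) this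
  have hWsumpos : 0 < Wsum := by
    rw [hWsumdef]
    apply Finset.sum_pos'
    · intro i _; exact hWnn i
    · exact ⟨0, Finset.mem_range.mpr (by omega), hWpos 0 (by omega)⟩
  -- variance identity
  have hT : ∑ i ∈ Finset.range (n+1), ∑ j ∈ Finset.range (n+1),
        W i * W j * (V j - V i) ^ 2 = 2 * Wsum * S2 := by
    have hinner : ∀ i, ∑ j ∈ Finset.range (n+1), W i * W j * (V j - V i) ^ 2
        = W i * S2 - 2 * (W i * V i) * (∑ j ∈ Finset.range (n+1), W j * V j)
          + W i * V i ^ 2 * Wsum := by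
      intro i
      rw [hS2def, hWsumdef, Finset.mul_sum, Finset.mul_sum, Finset.mul_sum,
        ← Finset.sum_sub_distrib, ← Finset.sum_add_distrib]
      apply Finset.sum_congr rfl
      intro j _
      ring
    rw [Finset.sum_congr rfl (fun i _ => hinner i), hS1]
    simp only [mul_zero, sub_zero, zero_mul]
    rw [Finset.sum_add_distrib, ← Finset.sum_mul, ← Finset.sum_mul,
      ← hWsumdef, ← hS2def]
    ring
  have hrec : ∀ i, i ≤ n →
      (1 - μ) * V i = Q i * (V i - V (i-1)) + P i * (V i - V (i+1)) := by
    intro i hi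
    linear_combination hrow i hi
  -- summation by parts
  have hSBP : ∀ f : ℕ → ℝ,
      ∑ i ∈ Finset.range (n+1), W i * f i * ((1 - μ) * V i)
      = ∑ k ∈ Finset.range n, W k * P k * (V (k+1) - V k) * (f (k+1) - f k) := by
    intro f
    have step1 : ∑ i ∈ Finset.range (n+1), W i * f i * ((1 - μ) * V i)
        = ∑ i ∈ Finset.range (n+1),
            (W i * Q i * f i * (V i - V (i-1)) + W i * P i * f i * (V i - V (i+1))) := by
      apply Finset.sum_congr rfl
      intro i hi
      have hi' : i ≤ n := by have := Finset.mem_range.mp hi; omega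
      rw [hrec i hi']
      ring
    rw [step1, Finset.sum_add_distrib]
    have hA : ∑ i ∈ Finset.range (n+1), W i * Q i * f i * (V i - V (i-1))
        = ∑ k ∈ Finset.range n, W k * P k * f (k+1) * (V (k+1) - V k) := by
      rw [Finset.sum_range_succ']
      have h0 : W 0 * Q 0 * f 0 * (V 0 - V (0-1)) = 0 := by
        norm_num
      rw [h0, add_zero]
      apply Finset.sum_congr rfl
      intro k hk
      have hk' : k < n := Finset.mem_range.mp hk
      have hr := hrev k hk'
      have hsub : k + 1 - 1 = k := rfl
      rw [hsub]
      linear_combination (f (k+1) * (V (k+1) - V k)) * hr.symm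
    have hB : ∑ i ∈ Finset.range (n+1), W i * P i * f i * (V i - V (i+1))
        = ∑ k ∈ Finset.range n, (- (W k * P k * f k * (V (k+1) - V k))) := by
      rw [Finset.sum_range_succ, hPn]
      have : W n * 0 * f n * (V n - V (n+1)) = 0 := by ring
      rw [this, add_zero]
      apply Finset.sum_congr rfl
      intro k _
      ring
    rw [hA, hB, ← Finset.sum_add_distrib]
    apply Finset.sum_congr rfl
    intro k _
    ring
  have hμ' : (1:ℝ) - μ ≠ 0 := sub_ne_zero.mpr (fun h => hμ h.symm)
  -- orthogonality to constants
  have hS1 : ∑ i ∈ Finset.range (n+1), W i * V i = 0 := by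
    have h := hSBP (fun _ => 1)
    simp only [sub_self, mul_zero, Finset.sum_const_zero] at h
    have hL : ∑ i ∈ Finset.range (n+1), W i * 1 * ((1 - μ) * V i)
        = (1 - μ) * ∑ i ∈ Finset.range (n+1), W i * V i := by
      rw [Finset.mul_sum]
      apply Finset.sum_congr rfl
      intro i _
      ring
    rw [hL] at h
    exact (mul_eq_zero.mp h).resolve_left hμ'
  -- Dirichlet form identity
  have hE : (1 - μ) * (∑ i ∈ Finset.range (n+1), W i * V i ^ 2)
      = ∑ k ∈ Finset.range n, W k * P k * (V (k+1) - V k) ^ 2 := by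
    have h := hSBP V
    have hL : ∑ i ∈ Finset.range (n+1), W i * V i * ((1 - μ) * V i)
        = (1 - μ) * ∑ i ∈ Finset.range (n+1), W i * V i ^ 2 := by
      rw [Finset.mul_sum]
      apply Finset.sum_congr rfl
      intro i _
      ring
    rw [hL] at h
    rw [h]
    apply Finset.sum_congr rfl
    intro k _
    ring
  obtain ⟨S2, hS2def⟩ : ∃ S2 : ℝ, S2 = ∑ i ∈ Finset.range (n+1), W i * V i ^ 2 := ⟨_, rfl⟩
  obtain ⟨Wsum, hWsumdef⟩ : ∃ Wsum : ℝ, Wsum = ∑ i ∈ Finset.range (n+1), W i := ⟨_, rfl⟩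
  have hS2pos : 0 < S2 := by
    obtain ⟨i0, hi0⟩ := Function.ne_iff.mp hv
    rw [hS2def]
    apply Finset.sum_pos'
    · intro i _
      exact mul_nonneg (hWnn i) (sq_nonneg _)
    · refine ⟨(i0 : ℕ), Finset.mem_range.mpr i0.isLt, ?_⟩
      have hVi0 : V (i0 : ℕ) = v i0 := by
        rw [hVdef]; simp only [dif_pos i0.isLt, Fin.eta]
      have hvne : V (i0 : ℕ) ≠ 0 := by rw [hVi0]; simpa using hi0
      have : 0 < V (i0 : ℕ) ^ 2 :=
        lt_of_le_of_ne (sq_nonneg _) (Ne.symm (pow_ne_zero 2 hvne))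
      exact mul_pos (hWpos _ (Nat.lt_succ_iff.mp i0.isLt)) this
  have hWsumpos : 0 < Wsum := by
    rw [hWsumdef]
    apply Finset.sum_pos'
    · intro i _; exact hWnn i
    · exact ⟨0, Finset.mem_range.mpr (by omega), hWpos 0 (by omega)⟩
  -- variance identity
  have hT : ∑ i ∈ Finset.range (n+1), ∑ j ∈ Finset.range (n+1),
        W i * W j * (V j - V i) ^ 2 = 2 * Wsum * S2 := by
    have hinner : ∀ i, ∑ j ∈ Finset.range (n+1), W i * W j * (V j - V i) ^ 2
        = W i * S2 - 2 * (W i * V i) * (∑ j ∈ Finset.range (n+1), W j * V j)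
          + W i * V i ^ 2 * Wsum := by
      intro i
      rw [hS2def, hWsumdef, Finset.mul_sum, Finset.mul_sum, Finset.mul_sum,
        ← Finset.sum_sub_distrib, ← Finset.sum_add_distrib]
      apply Finset.sum_congr rfl
      intro j _
      ring
    rw [Finset.sum_congr rfl (fun i _ => hinner i), hS1]
    simp only [mul_zero, sub_zero, zero_mul]
    rw [Finset.sum_add_distrib, ← Finset.sum_mul, ← Finset.sum_mul,
      ← hWsumdef, ← hS2def]
    ring
  -- telescoping + Cauchy-Schwarz path bound
  have hpath : ∀ i j, i ≤ j → j ≤ n →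
      (V j - V i)^2 ≤ (n:ℝ) * ∑ k ∈ Finset.Ico i j, (V (k+1) - V k)^2 := by
    intro i j hij hj
    have htel : V j - V i = ∑ k ∈ Finset.Ico i j, (V (k+1) - V k) := by
      rw [Finset.sum_Ico_eq_sub _ hij, Finset.sum_range_sub, Finset.sum_range_sub]
      ring
    rw [htel]
    have hcs := Finset.sum_mul_sq_le_sq_mul_sq (Finset.Ico i j) (fun _ => (1:ℝ))
      (fun k => V (k+1) - V k)
    simp only [one_mul, one_pow] at hcs
    rw [Finset.sum_const, Nat.card_Ico, nsmul_eq_mul, mul_one] at hcs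
    refine hcs.trans ?_
    apply mul_le_mul_of_nonneg_right
    · exact_mod_cast (by omega : j - i ≤ n)
    · exact Finset.sum_nonneg fun k _ => sq_nonneg _
  obtain ⟨c, hcdef⟩ : ∃ c : ℕ → ℕ → ℕ → ℝ,
      c = fun i j k => if i ≤ k ∧ k < j then (1:ℝ) else 0 := ⟨_, rfl⟩
  have hcnn : ∀ i j k, 0 ≤ c i j k := by
    intro i j k; rw [hcdef]; simp only; split_ifs <;> norm_num
  have hIco : ∀ i j : ℕ, j ≤ n →
      ∑ k ∈ Finset.range n, c i j k * (V (k+1) - V k)^2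
      = ∑ k ∈ Finset.Ico i j, (V (k+1) - V k)^2 := by
    intro i j hj
    rw [hcdef]
    simp only [ite_mul, one_mul, zero_mul]
    rw [← Finset.sum_filter]
    congr 1
    ext x
    simp only [Finset.mem_filter, Finset.mem_range, Finset.mem_Ico]
    omega
  have hpairO : ∀ i j, i ≤ j → j ≤ n →
      W i * W j * (V j - V i)^2 ≤ (n:ℝ) * ∑ k ∈ Finset.range n,
        c i j k * (W i * W j * (V (k+1) - V k)^2) := by
    intro i j hij hj
    have hWij : 0 ≤ W i * W j := mul_nonneg (hWnn i) (hWnn j)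
    calc W i * W j * (V j - V i)^2
        ≤ W i * W j * ((n:ℝ) * ∑ k ∈ Finset.Ico i j, (V (k+1) - V k)^2) :=
          mul_le_mul_of_nonneg_left (hpath i j hij hj) hWij
      _ = (n:ℝ) * ∑ k ∈ Finset.range n,
            c i j k * (W i * W j * (V (k+1) - V k)^2) := by
          have h2 : ∑ k ∈ Finset.range n, c i j k * (W i * W j * (V (k+1) - V k)^2)
              = W i * W j * ∑ k ∈ Finset.range n, c i j k * (V (k+1) - V k)^2 := by
            rw [Finset.mul_sum]
            apply Finset.sum_congr rfl
            intro k _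
            ring
          rw [h2, hIco i j hj]
          ring
  have hpair : ∀ i, i ≤ n → ∀ j, j ≤ n →
      W i * W j * (V j - V i)^2 ≤ (n:ℝ) * ∑ k ∈ Finset.range n,
        (c i j k + c j i k) * (W i * W j * (V (k+1) - V k)^2) := by
    intro i hi j hj
    have hnn : ∀ k, 0 ≤ W i * W j * (V (k+1) - V k)^2 := fun k =>
      mul_nonneg (mul_nonneg (hWnn i) (hWnn j)) (sq_nonneg _)
    rcases le_total i j with hij | hij
    · refine (hpairO i j hij hj).trans ?_
      apply mul_le_mul_of_nonneg_left _ (le_of_lt hn0)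
      apply Finset.sum_le_sum
      intro k _
      rw [add_mul]
      exact le_add_of_nonneg_right (mul_nonneg (hcnn j i k) (hnn k))
    · have h3 := hpairO j i hij hi
      calc W i * W j * (V j - V i)^2 = W j * W i * (V i - V j)^2 := by ring
        _ ≤ (n:ℝ) * ∑ k ∈ Finset.range n,
              c j i k * (W j * W i * (V (k+1) - V k)^2) := h3
        _ ≤ (n:ℝ) * ∑ k ∈ Finset.range n,
              (c i j k + c j i k) * (W i * W j * (V (k+1) - V k)^2) := by
            apply mul_le_mul_of_nonneg_left _ (le_of_lt hn0)
            apply Finset.sum_le_sum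
            intro k _
            have hcomm : W j * W i * (V (k+1) - V k)^2
                = W i * W j * (V (k+1) - V k)^2 := by ring
            rw [hcomm, add_mul]
            exact le_add_of_nonneg_left (mul_nonneg (hcnn i j k) (hnn k))
  -- per-k collapse of the double sum of indicators
  have hk2 : ∀ k, ∑ i ∈ Finset.range (n+1), ∑ j ∈ Finset.range (n+1),
        (c i j k + c j i k) * (W i * W j * (V (k+1) - V k)^2)
      = 2 * ((∑ i ∈ Finset.range (n+1), (if i ≤ k then W i else 0))
          * (∑ j ∈ Finset.range (n+1), (if k < j then W j else 0)))
          * (V (k+1) - V k)^2 := by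
    intro k
    have hsplitIJ : ∀ i j : ℕ,
        (c i j k + c j i k) * (W i * W j * (V (k+1) - V k)^2)
        = (if i ≤ k then W i else 0) * ((if k < j then W j else 0) * (V (k+1) - V k)^2)
          + (if k < i then W i else 0) * ((if j ≤ k then W j else 0) * (V (k+1) - V k)^2) := by
      intro i j
      rw [hcdef]
      simp only
      split_ifs with g1 g2 g3 g4 g5 g6 <;> first | (exfalso; omega) | ring
    rw [Finset.sum_congr rfl (fun i (_ : i ∈ Finset.range (n+1)) =>
      Finset.sum_congr rfl (fun j (_ : j ∈ Finset.range (n+1)) => hsplitIJ i j))]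
    rw [Finset.sum_congr rfl (fun i (_ : i ∈ Finset.range (n+1)) =>
      Finset.sum_add_distrib), Finset.sum_add_distrib]
    rw [bd_factor, bd_factor]
    ring
  -- global comparison
  have hswap : ∑ i ∈ Finset.range (n+1), ∑ j ∈ Finset.range (n+1),
      ((n:ℝ) * ∑ k ∈ Finset.range n, (c i j k + c j i k) * (W i * W j * (V (k+1) - V k)^2))
      = (n:ℝ) * ∑ k ∈ Finset.range n, ∑ i ∈ Finset.range (n+1), ∑ j ∈ Finset.range (n+1),
          (c i j k + c j i k) * (W i * W j * (V (k+1) - V k)^2) := by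
    simp only [← Finset.mul_sum]
    congr 1
    rw [Finset.sum_congr rfl (fun i (_ : i ∈ Finset.range (n+1)) =>
      Finset.sum_comm (s := Finset.range (n+1)) (t := Finset.range n)
        (f := fun j k => (c i j k + c j i k) * (W i * W j * (V (k+1) - V k)^2)))]
    exact Finset.sum_comm
  have hsum2 : 2 * Wsum * S2 ≤ (n:ℝ) * ∑ k ∈ Finset.range n,
      2 * ((∑ i ∈ Finset.range (n+1), (if i ≤ k then W i else 0))
        * (∑ j ∈ Finset.range (n+1), (if k < j then W j else 0))) * (V (k+1) - V k)^2 := by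
    rw [← hT]
    calc ∑ i ∈ Finset.range (n+1), ∑ j ∈ Finset.range (n+1), W i * W j * (V j - V i)^2
        ≤ ∑ i ∈ Finset.range (n+1), ∑ j ∈ Finset.range (n+1),
            ((n:ℝ) * ∑ k ∈ Finset.range n,
              (c i j k + c j i k) * (W i * W j * (V (k+1) - V k)^2)) := by
          apply Finset.sum_le_sum
          intro i hi
          apply Finset.sum_le_sum
          intro j hj
          exact hpair i (by have := Finset.mem_range.mp hi; omega)
            j (by have := Finset.mem_range.mp hj; omega)
      _ = (n:ℝ) * ∑ k ∈ Finset.range n, ∑ i ∈ Finset.range (n+1),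
            ∑ j ∈ Finset.range (n+1),
            (c i j k + c j i k) * (W i * W j * (V (k+1) - V k)^2) := hswap
      _ = (n:ℝ) * ∑ k ∈ Finset.range n,
            2 * ((∑ i ∈ Finset.range (n+1), (if i ≤ k then W i else 0))
              * (∑ j ∈ Finset.range (n+1), (if k < j then W j else 0)))
              * (V (k+1) - V k)^2 := by
          congr 1
          exact Finset.sum_congr rfl (fun k _ => hk2 k)
  obtain ⟨m, hmdef⟩ : ∃ m : ℝ, m = min (γmax / q) γmin := ⟨_, rfl⟩
  have hmpos : 0 < m := by rw [hmdef]; exact lt_min (by positivity) hγmin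
  have hmne : m ≠ 0 := ne_of_gt hmpos
  have hm1 : m ≤ γmin := hmdef ▸ min_le_right _ _
  have hm2 : m ≤ γmax / q := hmdef ▸ min_le_left _ _
  -- per-edge bounds on the rates
  have hPklow : ∀ k, k < n → γmin / ((n:ℝ) * lam) ≤ P k := by
    intro k hk
    have hk1n : (k:ℝ) + 1 ≤ (n:ℝ) := by exact_mod_cast hk
    have h1n : (1:ℝ)/n ≤ 1 - (k:ℝ)/n := by
      have h2 : (k:ℝ)/n + 1/n ≤ 1 := by
        rw [← add_div, div_le_one hn0]
        exact hk1n
      linarith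
    rw [hPdef]
    simp only
    calc γmin / ((n:ℝ) * lam) = γmin/lam * (1/n) := by
          ring
      _ ≤ γmin/lam * (1 - (k:ℝ)/n) :=
          mul_le_mul_of_nonneg_left h1n (by positivity)
  have hQlow : ∀ k : ℕ, γmax / ((n:ℝ) * q * lam) ≤ Q (k+1) := by
    intro k
    rw [hQdef]
    simp only
    push_cast
    apply (div_le_div_iff_of_pos_right (by positivity)).mpr
    nlinarith [Nat.cast_nonneg (α := ℝ) k]
  have hPknn : ∀ k, k < n → 0 ≤ P k := fun k hk =>
    le_trans (by positivity) (hPklow k hk)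
  -- the key per-edge bound using unimodality of the binomial weights
  have hkey : ∀ k, k < n →
      (∑ i ∈ Finset.range (n+1), (if i ≤ k then W i else 0))
        * (∑ j ∈ Finset.range (n+1), (if k < j then W j else 0))
        * (V (k+1) - V k)^2
      ≤ ((n:ℝ)+1) * Wsum * ((n:ℝ) * lam / m)
          * (W k * P k * (V (k+1) - V k)^2) := by
    intro k hk
    obtain ⟨X, hXdef⟩ : ∃ X : ℝ, X = (V (k+1) - V k)^2 := ⟨_, rfl⟩
    have hXnn : 0 ≤ X := hXdef ▸ sq_nonneg _
    have hFFeq : ∑ i ∈ Finset.range (n+1), (if i ≤ k then W i else 0)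
        = ∑ i ∈ Finset.range (k+1), W i := by
      rw [← Finset.sum_filter]
      congr 1
      ext x
      simp only [Finset.mem_filter, Finset.mem_range]
      omega
    have hGGeq : ∑ j ∈ Finset.range (n+1), (if k < j then W j else 0)
        = ∑ j ∈ Finset.Ico (k+1) (n+1), W j := by
      rw [← Finset.sum_filter]
      congr 1
      ext x
      simp only [Finset.mem_filter, Finset.mem_range, Finset.mem_Ico]
      omega
    have hFFle : ∑ i ∈ Finset.range (k+1), W i ≤ Wsum := by
      rw [hWsumdef]
      apply Finset.sum_le_sum_of_subset_of_nonneg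
      · exact Finset.range_subset_range.mpr (by omega)
      · intro i _ _; exact hWnn i
    have hGGle : ∑ j ∈ Finset.Ico (k+1) (n+1), W j ≤ Wsum := by
      rw [hWsumdef]
      apply Finset.sum_le_sum_of_subset_of_nonneg
      · intro x hx
        simp only [Finset.mem_Ico] at hx
        exact Finset.mem_range.mpr (by omega)
      · intro i _ _; exact hWnn i
    have hFFnn : 0 ≤ ∑ i ∈ Finset.range (k+1), W i :=
      Finset.sum_nonneg fun i _ => hWnn i
    have hGGnn : 0 ≤ ∑ j ∈ Finset.Ico (k+1) (n+1), W j :=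
      Finset.sum_nonneg fun j _ => hWnn j
    rw [hFFeq, hGGeq, ← hXdef]
    rcases le_total (θ * ((n - k : ℕ):ℝ)) ((k:ℝ)+1) with hcase | hcase
    · -- decreasing case : weights beyond k+1 are dominated by W (k+1)
      have hdec : ∀ i, k+1 ≤ i → W (i+1) ≤ W i := by
        intro i hik
        have h1 := hstep i
        have hle : θ * ((n - i:ℕ):ℝ) ≤ (i:ℝ)+1 := by
          have hc1 : ((n-i:ℕ):ℝ) ≤ ((n-k:ℕ):ℝ) := by
            exact_mod_cast Nat.sub_le_sub_left (by omega) n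
          have h2 : θ * ((n-i:ℕ):ℝ) ≤ θ * ((n-k:ℕ):ℝ) :=
            mul_le_mul_of_nonneg_left hc1 hθpos.le
          have h3 : (k:ℝ)+1 ≤ (i:ℝ)+1 := by
            have : (k:ℝ) ≤ (i:ℝ) := by exact_mod_cast (by omega : k ≤ i)
            linarith
          linarith
        have h4 : W (i+1) * ((i:ℝ)+1) ≤ W i * ((i:ℝ)+1) := by
          rw [h1]
          exact mul_le_mul_of_nonneg_left hle (hWnn i)
        exact le_of_mul_le_mul_right h4 (by positivity)
      have hGk : ∀ j ∈ Finset.Ico (k+1) (n+1), W j ≤ W (k+1) := fun j hj =>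
        bd_chain_down W (k+1) hdec j (Finset.mem_Ico.mp hj).1
      have hGGb : ∑ j ∈ Finset.Ico (k+1) (n+1), W j ≤ ((n:ℝ)+1) * W (k+1) := by
        have h5 := Finset.sum_le_card_nsmul (Finset.Ico (k+1) (n+1)) W (W (k+1)) hGk
        rw [Nat.card_Ico, nsmul_eq_mul] at h5
        refine h5.trans (mul_le_mul_of_nonneg_right ?_ (hWnn (k+1)))
        have : ((n+1) - (k+1) : ℕ) ≤ n + 1 := by omega
        calc (((n+1) - (k+1) : ℕ) : ℝ) ≤ ((n+1 : ℕ) : ℝ) := by exact_mod_cast this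
          _ = (n:ℝ) + 1 := by push_cast; ring
      have hone : 1 ≤ γmax / ((q:ℝ) * m) := by
        have h6 : 1 ≤ (γmax / q) / m := (one_le_div hmpos).mpr hm2
        have h7 : (γmax / q) / m = γmax / ((q:ℝ) * m) := by
          field_simp
        linarith [h7 ▸ h6]
      have hkey2 : W (k+1) * X ≤ ((n:ℝ) * lam / m) * (W k * P k * X) := by
        have hq1 : γmax/((n:ℝ)*q*lam) * (W (k+1) * X) ≤ Q (k+1) * (W (k+1) * X) :=
          mul_le_mul_of_nonneg_right (hQlow k) (mul_nonneg (hWnn _) hXnn)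
        have hqq : Q (k+1) * (W (k+1) * X) = W k * P k * X := by
          linear_combination X * (hrev k hk).symm
        calc W (k+1) * X ≤ (γmax/((q:ℝ)*m)) * (W (k+1) * X) :=
              le_mul_of_one_le_left (mul_nonneg (hWnn _) hXnn) hone
          _ = ((n:ℝ) * lam / m) * (γmax/((n:ℝ)*q*lam) * (W (k+1) * X)) := by
              field_simp
          _ ≤ ((n:ℝ) * lam / m) * (Q (k+1) * (W (k+1) * X)) :=
              mul_le_mul_of_nonneg_left hq1 (by positivity)
          _ = ((n:ℝ) * lam / m) * (W k * P k * X) := by rw [hqq]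
      calc (∑ i ∈ Finset.range (k+1), W i) * (∑ j ∈ Finset.Ico (k+1) (n+1), W j) * X
          ≤ Wsum * (((n:ℝ)+1) * W (k+1)) * X := by
            apply mul_le_mul_of_nonneg_right _ hXnn
            exact mul_le_mul hFFle hGGb hGGnn hWsumpos.le
        _ = ((n:ℝ)+1) * Wsum * (W (k+1) * X) := by ring
        _ ≤ ((n:ℝ)+1) * Wsum * (((n:ℝ) * lam / m) * (W k * P k * X)) := by
            apply mul_le_mul_of_nonneg_left hkey2
            positivity
        _ = ((n:ℝ)+1) * Wsum * ((n:ℝ) * lam / m) * (W k * P k * X) := by ring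
    · -- increasing case : weights up to k are dominated by W k
      have hinc : ∀ i, i < k → W i ≤ W (i+1) := by
        intro i hik
        have h1 := hstep i
        have hle : (i:ℝ)+1 ≤ θ * ((n - i:ℕ):ℝ) := by
          have hc1 : ((n-k:ℕ):ℝ) ≤ ((n-i:ℕ):ℝ) := by
            exact_mod_cast Nat.sub_le_sub_left (by omega) n
          have h2 : θ * ((n-k:ℕ):ℝ) ≤ θ * ((n-i:ℕ):ℝ) :=
            mul_le_mul_of_nonneg_left hc1 hθpos.le
          have h3 : (i:ℝ)+1 ≤ (k:ℝ)+1 := by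
            have : (i:ℝ) ≤ (k:ℝ) := by exact_mod_cast (by omega : i ≤ k)
            linarith
          linarith
        have h4 : W i * ((i:ℝ)+1) ≤ W (i+1) * ((i:ℝ)+1) := by
          rw [h1]
          calc W i * ((i:ℝ)+1) ≤ W i * (θ * ((n - i:ℕ):ℝ)) :=
              mul_le_mul_of_nonneg_left hle (hWnn i)
            _ = W i * (θ * ((n - i:ℕ):ℝ)) := rfl
        exact le_of_mul_le_mul_right h4 (by positivity)
      have hFk : ∀ i ∈ Finset.range (k+1), W i ≤ W k := fun i hi =>
        bd_chain_up W k hinc i (by have := Finset.mem_range.mp hi; omega)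
      have hFFb : ∑ i ∈ Finset.range (k+1), W i ≤ ((n:ℝ)+1) * W k := by
        have h5 := Finset.sum_le_card_nsmul (Finset.range (k+1)) W (W k) hFk
        rw [Finset.card_range, nsmul_eq_mul] at h5
        refine h5.trans (mul_le_mul_of_nonneg_right ?_ (hWnn k))
        have : (k+1 : ℕ) ≤ n + 1 := by omega
        calc ((k+1 : ℕ) : ℝ) ≤ ((n+1 : ℕ) : ℝ) := by exact_mod_cast this
          _ = (n:ℝ) + 1 := by push_cast; ring
      have hone : 1 ≤ γmin / m := (one_le_div hmpos).mpr hm1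
      have hkey1 : W k * X ≤ ((n:ℝ) * lam / m) * (W k * P k * X) := by
        have hp1 : γmin/((n:ℝ)*lam) * (W k * X) ≤ P k * (W k * X) :=
          mul_le_mul_of_nonneg_right (hPklow k hk) (mul_nonneg (hWnn _) hXnn)
        calc W k * X ≤ (γmin/m) * (W k * X) :=
              le_mul_of_one_le_left (mul_nonneg (hWnn _) hXnn) hone
          _ = ((n:ℝ) * lam / m) * (γmin/((n:ℝ)*lam) * (W k * X)) := by
              field_simp
          _ ≤ ((n:ℝ) * lam / m) * (P k * (W k * X)) :=
              mul_le_mul_of_nonneg_left hp1 (by positivity)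
          _ = ((n:ℝ) * lam / m) * (W k * P k * X) := by ring
      calc (∑ i ∈ Finset.range (k+1), W i) * (∑ j ∈ Finset.Ico (k+1) (n+1), W j) * X
          ≤ (((n:ℝ)+1) * W k) * Wsum * X := by
            apply mul_le_mul_of_nonneg_right _ hXnn
            exact mul_le_mul hFFb hGGle hGGnn (mul_nonneg (by positivity) (hWnn k))
        _ = ((n:ℝ)+1) * Wsum * (W k * X) := by ring
        _ ≤ ((n:ℝ)+1) * Wsum * (((n:ℝ) * lam / m) * (W k * P k * X)) := by
            apply mul_le_mul_of_nonneg_left hkey1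
            positivity
        _ = ((n:ℝ)+1) * Wsum * ((n:ℝ) * lam / m) * (W k * P k * X) := by ring
  -- assemble everything
  have hE' : (1 - μ) * S2 = ∑ k ∈ Finset.range n, W k * P k * (V (k+1) - V k) ^ 2 := by
    rw [hS2def]
    exact hE
  have hchain : 2 * Wsum * S2 ≤ (n:ℝ) * (2 * (((n:ℝ)+1) * Wsum * ((n:ℝ) * lam / m))
      * ((1 - μ) * S2)) := by
    refine hsum2.trans ?_
    apply mul_le_mul_of_nonneg_left _ hn0.le
    rw [hE', Finset.mul_sum]
    apply Finset.sum_le_sum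
    intro k hkk
    have hkn := Finset.mem_range.mp hkk
    have := hkey k hkn
    calc 2 * ((∑ i ∈ Finset.range (n+1), (if i ≤ k then W i else 0))
          * (∑ j ∈ Finset.range (n+1), (if k < j then W j else 0)))
          * (V (k+1) - V k)^2
        = 2 * ((∑ i ∈ Finset.range (n+1), (if i ≤ k then W i else 0))
          * (∑ j ∈ Finset.range (n+1), (if k < j then W j else 0))
          * (V (k+1) - V k)^2) := by ring
      _ ≤ 2 * (((n:ℝ)+1) * Wsum * ((n:ℝ) * lam / m)
            * (W k * P k * (V (k+1) - V k)^2)) := by linarith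
      _ = 2 * (((n:ℝ)+1) * Wsum * ((n:ℝ) * lam / m)) * (W k * P k * (V (k+1) - V k)^2) := by
          ring
  have hcpos : 0 < Wsum * S2 := mul_pos hWsumpos hS2pos
  have h1A : 1 ≤ ((n:ℝ)^2 * ((n:ℝ)+1) * lam / m) * (1 - μ) := by
    by_contra hcon
    push_neg at hcon
    have heq : (n:ℝ) * (2 * (((n:ℝ)+1) * Wsum * ((n:ℝ) * lam / m)) * ((1 - μ) * S2))
        = 2 * ((((n:ℝ)^2 * ((n:ℝ)+1) * lam / m) * (1 - μ)) * (Wsum * S2)) := by ring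
    have hlt := mul_lt_mul_of_pos_right hcon hcpos
    rw [one_mul] at hlt
    have hch := hchain
    rw [heq] at hch
    linarith
  have h6 : m ≤ (n:ℝ)^2 * ((n:ℝ)+1) * lam * (1 - μ) := by
    have h5 := mul_le_mul_of_nonneg_left h1A hmpos.le
    have h7 : m * (((n:ℝ)^2 * ((n:ℝ)+1) * lam / m) * (1 - μ))
        = (n:ℝ)^2 * ((n:ℝ)+1) * lam * (1 - μ) := by
      field_simp
    linarith [h7 ▸ h5]
  have hXpos : (0:ℝ) < (n:ℝ)^2 * ((n:ℝ)+1) * lam := by positivity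
  have hpos1μ : 0 < 1 - μ := by nlinarith [h6, hmpos, hXpos]
  rw [← hmdef]
  have hden : (0:ℝ) < lam * (n:ℝ)^2 * ((n:ℝ)+1)^2 := by positivity
  have hgoal : m / (lam * (n:ℝ)^2 * ((n:ℝ)+1)^2) ≤ 1 - μ := by
    rw [div_le_iff₀ hden]
    nlinarith [h6, hpos1μ, hn0, hlampos, sq_nonneg ((n:ℝ)+1),
      mul_nonneg (mul_nonneg hpos1μ.le hlampos.le) (sq_nonneg (n:ℝ)),
      mul_nonneg (mul_nonneg (mul_nonneg hpos1μ.le hlampos.le) (sq_nonneg (n:ℝ))) hn0.le]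
  linarith [hgoal]
end
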